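/- arXiv:2502.18203 — 10 statements merged into one kernel-verified Lean document; each statement's English description precedes it below -/
import Mathlib

section
/- Let G be a subgroup of SL₂(ℤ) of finite index. Then there exists a positive integer n such that for every 2×2 integer matrix B, the matrix n·B lies in the ℤ-submodule of the additive group of 2×2 integer matrices generated by the elements of G (viewed as integer matrices). -/
open Matrix MatrixGroups

/-- `M(G)`: the ℤ-submodule of 2×2 integer matrices generated by the elements of `G`. -/
def matSpan (G : Subgroup SL(2, ℤ)) : Submodule ℤ (Matrix (Fin 2) (Fin 2) ℤ) :=
  Submodule.span ℤ ((fun A : SL(2, ℤ) => (A : Matrix (Fin 2) (Fin 2) ℤ)) '' (G : Set SL(2, ℤ)))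

def matT : SL(2, ℤ) := ⟨!![1, 1; 0, 1], by simp [Matrix.det_fin_two_of]⟩

def matT' : SL(2, ℤ) := ⟨!![1, 0; 1, 1], by simp [Matrix.det_fin_two_of]⟩

lemma coe_matT_pow (k : ℕ) :
    ((matT ^ k : SL(2, ℤ)) : Matrix (Fin 2) (Fin 2) ℤ) = !![1, (k : ℤ); 0, 1] := by
  induction k with
  | zero => simp [Matrix.one_fin_two]
  | succ n ih =>
    rw [pow_succ]
    refine (congrArg (· * (matT : Matrix (Fin 2) (Fin 2) ℤ)) ih).trans ?_
    show _ * (matT : Matrix (Fin 2) (Fin 2) ℤ) = _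
    rw [matT]
    show _ * !![1, 1; 0, 1] = _
    rw [Matrix.mul_fin_two]
    norm_num [add_comm]

lemma coe_matT'_pow (k : ℕ) :
    ((matT' ^ k : SL(2, ℤ)) : Matrix (Fin 2) (Fin 2) ℤ) = !![1, 0; (k : ℤ), 1] := by
  induction k with
  | zero => simp [Matrix.one_fin_two]
  | succ n ih =>
    rw [pow_succ]
    refine (congrArg (· * (matT' : Matrix (Fin 2) (Fin 2) ℤ)) ih).trans ?_
    show _ * (matT' : Matrix (Fin 2) (Fin 2) ℤ) = _
    rw [matT']
    show _ * !![1, 0; 1, 1] = _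
    rw [Matrix.mul_fin_two]
    norm_num [add_comm]

lemma mem_matSpan_of_mem {G : Subgroup SL(2, ℤ)} {g : SL(2, ℤ)} (hg : g ∈ G) :
    (g : Matrix (Fin 2) (Fin 2) ℤ) ∈ matSpan G :=
  Submodule.subset_span ⟨g, hg, rfl⟩

/-- For a finite-index subgroup `G ≤ SL₂(ℤ)` there is a positive integer `n` with
`n·M₂ ⊆ M(G)`. -/
theorem stmt_1 (G : Subgroup SL(2, ℤ)) (hG : G.FiniteIndex) :
    ∃ n : ℕ, 0 < n ∧ ∀ B : Matrix (Fin 2) (Fin 2) ℤ, (n : ℤ) • B ∈ matSpan G := by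
  obtain ⟨a, ha0, -, haG⟩ := Subgroup.exists_pow_mem_of_index_ne_zero hG.index_ne_zero matT
  obtain ⟨b, hb0, -, hbG⟩ := Subgroup.exists_pow_mem_of_index_ne_zero hG.index_ne_zero matT'
  refine ⟨a * b, Nat.mul_pos ha0 hb0, fun B => ?_⟩
  have h1 : ((1 : SL(2, ℤ)) : Matrix (Fin 2) (Fin 2) ℤ) ∈ matSpan G :=
    mem_matSpan_of_mem G.one_mem
  replace h1 : (1 : Matrix (Fin 2) (Fin 2) ℤ) ∈ matSpan G := h1
  have hTa := mem_matSpan_of_mem haG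
  have hTb := mem_matSpan_of_mem hbG
  have hTab := mem_matSpan_of_mem (G.mul_mem haG hbG)
  have hTba := mem_matSpan_of_mem (G.mul_mem hbG haG)
  replace hTab := Eq.mp (congrArg (· ∈ matSpan G)
    (congrArg₂ (· * ·) (coe_matT_pow a) (coe_matT'_pow b) :
      ((matT ^ a : SL(2, ℤ)) : Matrix (Fin 2) (Fin 2) ℤ) * ((matT' ^ b : SL(2, ℤ)) : Matrix (Fin 2) (Fin 2) ℤ) = _)) hTab
  replace hTba := Eq.mp (congrArg (· ∈ matSpan G)
    (congrArg₂ (· * ·) (coe_matT'_pow b) (coe_matT_pow a) :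
      ((matT' ^ b : SL(2, ℤ)) : Matrix (Fin 2) (Fin 2) ℤ) * ((matT ^ a : SL(2, ℤ)) : Matrix (Fin 2) (Fin 2) ℤ) = _)) hTba
  replace hTa := Eq.mp (congrArg (· ∈ matSpan G) (coe_matT_pow a)) hTa
  replace hTb := Eq.mp (congrArg (· ∈ matSpan G) (coe_matT'_pow b)) hTb
  -- express (a*b) • B as combination
  have key : ((a * b : ℕ) : ℤ) • B =
      B 0 0 • (!![1, (a:ℤ); 0, 1] * !![1, 0; (b:ℤ), 1])
      + B 1 1 • (!![1, 0; (b:ℤ), 1] * !![1, (a:ℤ); 0, 1])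
      + (-(B 0 0 + B 1 1) + B 0 1 * (b:ℤ)) • !![1, (a:ℤ); 0, 1]
      + (-(B 0 0 + B 1 1) + B 1 0 * (a:ℤ)) • !![1, 0; (b:ℤ), 1]
      + (B 0 0 + B 1 1 - B 0 1 * (b:ℤ) - B 1 0 * (a:ℤ)) • (1 : Matrix (Fin 2) (Fin 2) ℤ) := by
    rw [Matrix.mul_fin_two, Matrix.mul_fin_two]
    ext i j
    fin_cases i <;> fin_cases j <;>
      · simp [Matrix.one_fin_two]
        ring
  rw [key]
  exact add_mem (add_mem (add_mem (add_mem (Submodule.smul_mem _ _ hTab)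
    (Submodule.smul_mem _ _ hTba)) (Submodule.smul_mem _ _ hTa))
    (Submodule.smul_mem _ _ hTb)) (Submodule.smul_mem _ _ h1)
end

section
/- Let P ∈ SL₂(ℝ) be such that for every A ∈ SL₂(ℤ), the conjugate P⁻¹·A·P has integer entries. Then P itself has integer entries, so P ∈ SL₂(ℤ). (Equivalently, in the paper's notation, N(SL₂(ℤ)) = 1: the only coset P·SL₂(ℤ) in SL₂(ℝ)/SL₂(ℤ) with P⁻¹·SL₂(ℤ)·P ⊆ SL₂(ℤ) is the coset of the identity.) -/
open Matrix MatrixGroups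

/-- The key number-theoretic fact: if `N > 0` divides `k^2`, `p^2`, `q^2`, and
`p*q = N*(k-1)`, then `N` is a perfect square whose square root divides `k`, `p`, `q`. -/
lemma nt_aux (N k p q B C D : ℤ) (hN : 0 < N) (hk : k^2 = N*D) (hp : p^2 = N*B)
    (hq : q^2 = N*C) (hpq : p*q = N*(k-1)) :
    ∃ s : ℤ, 0 ≤ s ∧ s^2 = N ∧ s ∣ k ∧ s ∣ p ∧ s ∣ q := by
  have hNk2 : N ∣ k^2 := ⟨D, hk⟩
  have hco1 : IsCoprime (k-1) k := ⟨-1, 1, by ring⟩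
  have hco2 : IsCoprime (k-1) N :=
    (hco1.pow_right (n := 2)).of_isCoprime_of_dvd_right hNk2
  have hco3 : IsCoprime N (k-1) := hco2.symm
  have hBC : B * C = (k-1)^2 := by
    have h2 : N^2 * (B*C) = N^2 * ((k-1)^2) := by
      have h3 : (p*q)^2 = (N*(k-1))^2 := by rw [hpq]
      calc N^2 * (B*C) = (p^2) * (q^2) := by rw [hp, hq]; ring
        _ = (p*q)^2 := by ring
        _ = (N*(k-1))^2 := h3
        _ = N^2 * ((k-1)^2) := by ring
    exact mul_left_cancel₀ (pow_ne_zero 2 hN.ne') h2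
  have hcoB : IsCoprime N B := by
    have h4 : IsCoprime N (B*C) := by rw [hBC]; exact hco3.pow_right
    exact h4.of_isCoprime_of_dvd_right ⟨C, rfl⟩
  obtain ⟨s0, hs0⟩ := Int.sq_of_isCoprime hcoB hp.symm
  have hs : N = s0^2 := by
    rcases hs0 with h | h
    · exact h
    · nlinarith [sq_nonneg s0]
  refine ⟨|s0|, abs_nonneg _, by rw [sq_abs]; exact hs.symm, ?_, ?_, ?_⟩
  · rw [← Int.pow_dvd_pow_iff (two_ne_zero), sq_abs, ← hs]; exact ⟨D, hk⟩
  · rw [← Int.pow_dvd_pow_iff (two_ne_zero), sq_abs, ← hs]; exact ⟨B, hp⟩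
  · rw [← Int.pow_dvd_pow_iff (two_ne_zero), sq_abs, ← hs]; exact ⟨C, hq⟩

lemma cancel_aux (s y : ℤ) (hs : (s:ℝ) ≠ 0) (x : ℝ)
    (h : (s:ℝ) * x = ((s*y : ℤ) : ℝ)) : x = (y:ℝ) := by
  apply mul_left_cancel₀ hs
  rw [h]; push_cast; ring

/-- If `a d - b c = 1` and the pairwise products of `a,b,c,d` listed below are all
integers, then `a,b,c,d` are themselves integers. -/
lemma key_aux (a b c d : ℝ) (hdet : a*d - b*c = 1)
    (haa : ∃ n:ℤ, a*a = n) (hab : ∃ n:ℤ, a*b = n) (hac : ∃ n:ℤ, a*c = n)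
    (hbb : ∃ n:ℤ, b*b = n) (hbd : ∃ n:ℤ, b*d = n) (hcc : ∃ n:ℤ, c*c = n)
    (hcd : ∃ n:ℤ, c*d = n) (hdd : ∃ n:ℤ, d*d = n) :
    (∃ n:ℤ, a = n) ∧ (∃ n:ℤ, b = n) ∧ (∃ n:ℤ, c = n) ∧ (∃ n:ℤ, d = n) := by
  obtain ⟨N, hN⟩ := haa
  obtain ⟨p, hp⟩ := hab
  obtain ⟨q, hq⟩ := hac
  obtain ⟨B, hB⟩ := hbb
  obtain ⟨m, hm⟩ := hbd
  obtain ⟨C, hC⟩ := hcc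
  obtain ⟨w, hw⟩ := hcd
  obtain ⟨D, hD⟩ := hdd
  by_cases ha0 : a = 0
  · -- then b*c = -1, b² * c² = 1, B = 1
    have hbc : b * c = -1 := by rw [ha0] at hdet; linarith
    have hBC' : B * C = 1 := by
      have hBC : (B : ℝ) * C = 1 := by rw [← hB, ← hC]; nlinarith [hbc]
      exact_mod_cast hBC
    have hBpos : 0 ≤ B := by
      have : (0:ℝ) ≤ (B:ℝ) := by rw [← hB]; exact mul_self_nonneg b
      exact_mod_cast this
    have hB1 : B = 1 := by
      rcases Int.isUnit_eq_one_or (IsUnit.of_mul_eq_one (a := B) C hBC') with h | h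
      · exact h
      · omega
    have hb2 : b * b = 1 := by rw [hB1] at hB; exact_mod_cast hB
    rcases mul_self_eq_one_iff.mp hb2 with hb | hb
    · refine ⟨⟨0, by rw [ha0]; norm_num⟩, ⟨1, by rw [hb]; norm_num⟩,
        ⟨-1, ?_⟩, ⟨m, ?_⟩⟩
      · rw [hb] at hbc; push_cast; linarith
      · rw [hb] at hm; push_cast; linarith
    · refine ⟨⟨0, by rw [ha0]; norm_num⟩, ⟨-1, by rw [hb]; push_cast; linarith⟩,
        ⟨1, ?_⟩, ⟨-m, ?_⟩⟩
      · rw [hb] at hbc; push_cast; linarith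
      · rw [hb] at hm; push_cast; linarith
  · -- a ≠ 0
    have hNpos : (0:ℝ) < N := by rw [← hN]; exact mul_self_pos.mpr ha0
    have had : a * d = ((N*D - p*w : ℤ) : ℝ) := by
      push_cast
      rw [← hN, ← hD, ← hp, ← hw]
      linear_combination (-(a*d)) * hdet
    set k : ℤ := N*D - p*w with hkdef
    have hk2 : k^2 = N * D := by
      have h1 : ((k:ℝ))^2 = (N:ℝ) * D := by rw [← had, ← hN, ← hD]; ring
      exact_mod_cast h1
    have hp2 : p^2 = N * B := by
      have h1 : ((p:ℝ))^2 = (N:ℝ) * B := by rw [← hp, ← hN, ← hB]; ring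
      exact_mod_cast h1
    have hq2 : q^2 = N * C := by
      have h1 : ((q:ℝ))^2 = (N:ℝ) * C := by rw [← hq, ← hN, ← hC]; ring
      exact_mod_cast h1
    have hpq : p * q = N * (k - 1) := by
      have h1 : ((p:ℝ)) * q = (N:ℝ) * ((k:ℝ) - 1) := by
        rw [← hp, ← hq, ← hN, ← had]
        linear_combination (-(a*a)) * hdet
      exact_mod_cast h1
    have hNpos' : 0 < N := by exact_mod_cast hNpos
    obtain ⟨s, hs0, hsN, ⟨d', hd'⟩, ⟨b', hb'⟩, ⟨c', hc'⟩⟩ :=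
      nt_aux N k p q B C D hNpos' hk2 hp2 hq2 hpq
    have hsq : a * a = (s:ℝ) * (s:ℝ) := by
      rw [hN]
      have : ((s^2 : ℤ):ℝ) = ((N:ℤ):ℝ) := by exact_mod_cast congrArg (fun z : ℤ => (z:ℝ)) hsN
      push_cast at this
      linarith [this, sq (s:ℝ)]
    have hsne : (s:ℝ) ≠ 0 := by
      intro hs
      rw [hs, mul_zero] at hsq
      exact ha0 (by nlinarith [hsq])
    have has : (a - s) * (a + s) = 0 := by linear_combination hsq
    rcases mul_eq_zero.mp has with h | h
    · -- a = s
      have ha : a = (s:ℝ) := by linarith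
      refine ⟨⟨s, ha⟩,
        ⟨b', cancel_aux s b' hsne b (by rw [← ha, hp]; exact_mod_cast hb')⟩,
        ⟨c', cancel_aux s c' hsne c (by rw [← ha, hq]; exact_mod_cast hc')⟩,
        ⟨d', cancel_aux s d' hsne d (by rw [← ha, had]; exact_mod_cast hd')⟩⟩
    · -- a = -s
      have ha : a = -(s:ℝ) := by linarith
      have g1 : -(s:ℝ) * b = ((s * b' : ℤ):ℝ) := by
        rw [show -(s:ℝ)*b = a*b from by rw [ha], hp]; exact_mod_cast hb'
      have g2 : -(s:ℝ) * c = ((s * c' : ℤ):ℝ) := by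
        rw [show -(s:ℝ)*c = a*c from by rw [ha], hq]; exact_mod_cast hc'
      have g3 : -(s:ℝ) * d = ((s * d' : ℤ):ℝ) := by
        rw [show -(s:ℝ)*d = a*d from by rw [ha], had]; exact_mod_cast hd'
      push_cast at g1 g2 g3
      refine ⟨⟨-s, by rw [ha]; push_cast; ring⟩,
        ⟨-b', cancel_aux s (-b') hsne b (by push_cast; linear_combination -g1)⟩,
        ⟨-c', cancel_aux s (-c') hsne c (by push_cast; linear_combination -g2)⟩,
        ⟨-d', cancel_aux s (-d') hsne d (by push_cast; linear_combination -g3)⟩⟩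

/-- A real 2×2 matrix has integer entries. -/
def IsIntegerMatrix (M : Matrix (Fin 2) (Fin 2) ℝ) : Prop :=
  ∀ i j, ∃ k : ℤ, M i j = (k : ℝ)

/-- If `P ∈ SL₂(ℝ)` conjugates every element of `SL₂(ℤ)` to an integer matrix,
then `P` itself has integer entries. -/
theorem stmt_3 (P : Matrix (Fin 2) (Fin 2) ℝ) (hP : P.det = 1)
    (h : ∀ A : SL(2, ℤ),
      IsIntegerMatrix (P⁻¹ * ((A : Matrix (Fin 2) (Fin 2) ℤ)).map (Int.cast : ℤ → ℝ) * P)) :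
    IsIntegerMatrix P := by
  set a := P 0 0 with ha
  set b := P 0 1 with hb
  set c := P 1 0 with hc
  set d := P 1 1 with hd
  have hPe : P = !![a, b; c, d] := by rw [ha, hb, hc, hd]; exact Matrix.eta_fin_two P
  have hdet : a * d - b * c = 1 := by
    rw [Matrix.det_fin_two] at hP; exact hP
  have hPinv : (!![a, b; c, d] : Matrix (Fin 2) (Fin 2) ℝ)⁻¹ = !![d, -b; -c, a] := by
    rw [← hPe, Matrix.inv_def, hP, Matrix.adjugate_fin_two, hPe]
    simp
  have dT : (!![1, 1; 0, 1] : Matrix (Fin 2) (Fin 2) ℤ).det = 1 := by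
    simp [Matrix.det_fin_two]
  have dT' : (!![1, 0; 1, 1] : Matrix (Fin 2) (Fin 2) ℤ).det = 1 := by
    simp [Matrix.det_fin_two]
  have dU : (!![2, 1; 1, 1] : Matrix (Fin 2) (Fin 2) ℤ).det = 1 := by
    simp [Matrix.det_fin_two]
  have hmap : ∀ (x y z w : ℤ), (!![x, y; z, w] : Matrix (Fin 2) (Fin 2) ℤ).map
      (Int.cast : ℤ → ℝ) = !![(x:ℝ), y; z, w] := by
    intro x y z w
    ext i j
    fin_cases i <;> fin_cases j <;> simp
  have hT1 := h ⟨!![1,1;0,1], dT⟩ 0 0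
  have hT2 := h ⟨!![1,1;0,1], dT⟩ 0 1
  have hT3 := h ⟨!![1,1;0,1], dT⟩ 1 0
  have hT'1 := h ⟨!![1,0;1,1], dT'⟩ 0 0
  have hT'2 := h ⟨!![1,0;1,1], dT'⟩ 0 1
  have hT'3 := h ⟨!![1,0;1,1], dT'⟩ 1 0
  have hU2 := h ⟨!![2,1;1,1], dU⟩ 0 1
  have hU3 := h ⟨!![2,1;1,1], dU⟩ 1 0
  simp only [SpecialLinearGroup.coe_mk, hmap, hPe, hPinv] at hT1 hT2 hT3 hT'1 hT'2 hT'3 hU2 hU3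
  simp [Matrix.mul_fin_two] at hT1 hT2 hT3 hT'1 hT'2 hT'3 hU2 hU3
  obtain ⟨n1, e1⟩ := hT1
  obtain ⟨n2, e2⟩ := hT2
  obtain ⟨n3, e3⟩ := hT3
  obtain ⟨n4, e4⟩ := hT'1
  obtain ⟨n5, e5⟩ := hT'2
  obtain ⟨n6, e6⟩ := hT'3
  obtain ⟨n7, e7⟩ := hU2
  obtain ⟨n8, e8⟩ := hU3
  have haa : ∃ n:ℤ, a*a = n := ⟨n6, by linear_combination e6⟩
  have hab : ∃ n:ℤ, a*b = n := ⟨1 - n4, by push_cast; linear_combination hdet - e4⟩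
  have hac : ∃ n:ℤ, a*c = n := ⟨n6 + n3 - n8, by push_cast; linear_combination e6 + e3 - e8⟩
  have hbb : ∃ n:ℤ, b*b = n := ⟨-n5, by push_cast; linear_combination -e5⟩
  have hbd : ∃ n:ℤ, b*d = n := ⟨n7 - n2 - n5, by push_cast; linear_combination e7 - e2 - e5⟩
  have hcc : ∃ n:ℤ, c*c = n := ⟨-n3, by push_cast; linear_combination -e3⟩
  have hcd : ∃ n:ℤ, c*d = n := ⟨n1 - 1, by push_cast; linear_combination e1 - hdet⟩
  have hdd : ∃ n:ℤ, d*d = n := ⟨n2, by linear_combination e2⟩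
  obtain ⟨Ha, Hb, Hc, Hd⟩ := key_aux a b c d hdet haa hab hac hbb hbd hcc hcd hdd
  intro i j
  fin_cases i <;> fin_cases j
  · exact Ha
  · exact Hb
  · exact Hc
  · exact Hd
end

section
/- Let G be a subgroup of SL₂(ℤ) of finite index and let P ∈ SL₂(ℝ) be such that for every A ∈ G the conjugate P⁻¹·A·P has integer entries. Then there exists a positive integer m such that √m·P is a 2×2 integer matrix; moreover det(√m·P) = m. -/
open Matrix MatrixGroups

def Tm : SL(2, ℤ) := ⟨!![1,1;0,1], by simp [Matrix.det_fin_two_of]⟩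
def Lm : SL(2, ℤ) := ⟨!![1,0;1,1], by simp [Matrix.det_fin_two_of]⟩

lemma coe_Tm_pow (n : ℕ) : ((Tm ^ n : SL(2, ℤ)) : Matrix (Fin 2) (Fin 2) ℤ) = !![1,(n:ℤ);0,1] := by
  induction n with
  | zero => ext i j; fin_cases i <;> fin_cases j <;> simp
  | succ n ih =>
      rw [pow_succ, Matrix.SpecialLinearGroup.coe_mul, ih]
      show _ * (Tm : Matrix (Fin 2) (Fin 2) ℤ) = _
      rw [show (Tm : Matrix (Fin 2) (Fin 2) ℤ) = !![1,1;0,1] from rfl]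
      ext i j
      fin_cases i <;> fin_cases j <;> simp [Matrix.mul_apply, Fin.sum_univ_two] <;> ring

lemma coe_Lm_pow (n : ℕ) : ((Lm ^ n : SL(2, ℤ)) : Matrix (Fin 2) (Fin 2) ℤ) = !![1,0;(n:ℤ),1] := by
  induction n with
  | zero => ext i j; fin_cases i <;> fin_cases j <;> simp
  | succ n ih =>
      rw [pow_succ, Matrix.SpecialLinearGroup.coe_mul, ih]
      show _ * (Lm : Matrix (Fin 2) (Fin 2) ℤ) = _
      rw [show (Lm : Matrix (Fin 2) (Fin 2) ℤ) = !![1,0;1,1] from rfl]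
      ext i j
      fin_cases i <;> fin_cases j <;> simp [Matrix.mul_apply, Fin.sum_univ_two] <;> ring

lemma map_fin_two (p q r s : ℤ) :
    (!![p,q;r,s]).map (Int.cast : ℤ → ℝ) = !![(p:ℝ),(q:ℝ);(r:ℝ),(s:ℝ)] := by
  ext i j; fin_cases i <;> fin_cases j <;> simp [Matrix.map_apply]

/-- If `P ∈ SL₂(ℝ)` conjugates a finite-index subgroup `G ≤ SL₂(ℤ)` into integer matrices,
then `√m·P` is an integer matrix of determinant `m` for some positive integer `m`. -/
theorem stmt_4 (G : Subgroup SL(2, ℤ)) (hG : G.FiniteIndex)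
    (P : Matrix (Fin 2) (Fin 2) ℝ) (hP : P.det = 1)
    (h : ∀ A ∈ G,
      IsIntegerMatrix (P⁻¹ * ((A : Matrix (Fin 2) (Fin 2) ℤ)).map (Int.cast : ℤ → ℝ) * P)) :
    ∃ m : ℕ, 0 < m ∧ ∃ B : Matrix (Fin 2) (Fin 2) ℤ,
      (Real.sqrt m) • P = B.map (Int.cast : ℤ → ℝ) ∧ B.det = (m : ℤ) := by
  obtain ⟨n₁, hn₁pos, -, hT1⟩ := Subgroup.exists_pow_mem_of_index_ne_zero hG.index_ne_zero Tm
  obtain ⟨n₂, hn₂pos, -, hL1⟩ := Subgroup.exists_pow_mem_of_index_ne_zero hG.index_ne_zero Lm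
  set N := n₁ * n₂ with hNdef
  have hNpos : 0 < N := Nat.mul_pos hn₁pos hn₂pos
  have hTN : Tm ^ N ∈ G := by rw [hNdef, pow_mul]; exact Subgroup.pow_mem G hT1 n₂
  have hLN : Lm ^ N ∈ G := by rw [hNdef, mul_comm, pow_mul]; exact Subgroup.pow_mem G hL1 n₁
  have hTLN : Tm ^ N * Lm ^ N ∈ G := Subgroup.mul_mem G hTN hLN
  obtain ⟨a, b, c, d, hPmat⟩ : ∃ a b c d, P = !![a,b;c,d] :=
    ⟨P 0 0, P 0 1, P 1 0, P 1 1, by ext i j; fin_cases i <;> fin_cases j <;> rfl⟩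
  subst hPmat
  set n : ℝ := (N : ℝ) with hn
  have hnpos : 0 < n := by rw [hn]; exact_mod_cast hNpos
  have hdet : a * d - b * c = 1 := by rw [Matrix.det_fin_two_of] at hP; exact hP
  have hQ : (!![a,b;c,d] : Matrix (Fin 2) (Fin 2) ℝ)⁻¹ = !![d,-b;-c,a] := by
    apply Matrix.inv_eq_right_inv
    rw [Matrix.mul_fin_two]
    ext i j
    fin_cases i <;> fin_cases j <;>
      simp [Matrix.one_apply] <;>
      first
        | linear_combination hdet
        | ring
  have hcoeTL : ((Tm ^ N * Lm ^ N : SL(2,ℤ)) : Matrix (Fin 2) (Fin 2) ℤ)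
      = !![1+(N:ℤ)*N, (N:ℤ); (N:ℤ), 1] := by
    rw [Matrix.SpecialLinearGroup.coe_mul, coe_Tm_pow, coe_Lm_pow]
    ext i j
    fin_cases i <;> fin_cases j <;> simp [Matrix.mul_apply, Fin.sum_univ_two] <;> ring
  have hT := h (Tm ^ N) hTN
  have hL := h (Lm ^ N) hLN
  have hTL := h (Tm ^ N * Lm ^ N) hTLN
  rw [coe_Tm_pow, hQ, map_fin_two] at hT
  rw [coe_Lm_pow, hQ, map_fin_two] at hL
  rw [hcoeTL, hQ, map_fin_two] at hTL
  have hTmat : !![d,-b;-c,a] * !![((1:ℤ):ℝ),((N:ℤ):ℝ);((0:ℤ):ℝ),((1:ℤ):ℝ)] * (!![a,b;c,d] : Matrix (Fin 2) (Fin 2) ℝ)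
      = !![1+n*(c*d), n*(d*d); -(n*(c*c)), 1-n*(c*d)] := by
    rw [Matrix.mul_fin_two, Matrix.mul_fin_two]
    ext i j
    fin_cases i <;> fin_cases j <;> (simp; push_cast; try ring) <;> linear_combination hdet
  have hLmat : !![d,-b;-c,a] * !![((1:ℤ):ℝ),((0:ℤ):ℝ);((N:ℤ):ℝ),((1:ℤ):ℝ)] * (!![a,b;c,d] : Matrix (Fin 2) (Fin 2) ℝ)
      = !![1-n*(a*b), -(n*(b*b)); n*(a*a), 1+n*(a*b)] := by
    rw [Matrix.mul_fin_two, Matrix.mul_fin_two]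
    ext i j
    fin_cases i <;> fin_cases j <;> (simp; push_cast; try ring) <;> linear_combination hdet
  have hTLmat : !![d,-b;-c,a] * !![((1+(N:ℤ)*N : ℤ):ℝ),((N:ℤ):ℝ);((N:ℤ):ℝ),((1:ℤ):ℝ)] * (!![a,b;c,d] : Matrix (Fin 2) (Fin 2) ℝ)
      = !![1 + n*n*(a*d) + n*(c*d) - n*(a*b), n*n*(b*d) + n*(d*d) - n*(b*b);
          -(n*n*(a*c)) + n*(a*a) - n*(c*c), 1 - n*n*(b*c) + n*(a*b) - n*(c*d)] := by
    rw [Matrix.mul_fin_two, Matrix.mul_fin_two]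
    ext i j
    fin_cases i <;> fin_cases j <;> (simp; push_cast; try ring) <;> linear_combination hdet
  rw [hTmat] at hT
  rw [hLmat] at hL
  rw [hTLmat] at hTL
  -- the ten integrality facts
  have f_d2 : ∃ k : ℤ, n * (d*d) = k := by
    obtain ⟨k, hk⟩ := hT 0 1; simp at hk; exact ⟨k, hk⟩
  have f_c2 : ∃ k : ℤ, n * (c*c) = k := by
    obtain ⟨k, hk⟩ := hT 1 0; simp at hk
    exact ⟨-k, by push_cast; linear_combination -hk⟩
  have f_cd : ∃ k : ℤ, n * (c*d) = k := by
    obtain ⟨k, hk⟩ := hT 0 0; simp at hk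
    exact ⟨k-1, by push_cast; linear_combination hk⟩
  have f_a2 : ∃ k : ℤ, n * (a*a) = k := by
    obtain ⟨k, hk⟩ := hL 1 0; simp at hk; exact ⟨k, hk⟩
  have f_b2 : ∃ k : ℤ, n * (b*b) = k := by
    obtain ⟨k, hk⟩ := hL 0 1; simp at hk
    exact ⟨-k, by push_cast; linear_combination -hk⟩
  have f_ab : ∃ k : ℤ, n * (a*b) = k := by
    obtain ⟨k, hk⟩ := hL 1 1; simp at hk
    exact ⟨k-1, by push_cast; linear_combination hk⟩
  obtain ⟨k_cd, hk_cd⟩ := f_cd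
  obtain ⟨k_ab, hk_ab⟩ := f_ab
  obtain ⟨k_a2, hk_a2⟩ := f_a2
  obtain ⟨k_b2, hk_b2⟩ := f_b2
  obtain ⟨k_c2, hk_c2⟩ := f_c2
  obtain ⟨k_d2, hk_d2⟩ := f_d2
  have g_ad : ∃ k : ℤ, n * n * (a*d) = k := by
    obtain ⟨k, hk⟩ := hTL 0 0; simp at hk
    exact ⟨k - 1 - k_cd + k_ab, by push_cast; linear_combination hk - hk_cd + hk_ab⟩
  have g_bd : ∃ k : ℤ, n * n * (b*d) = k := by
    obtain ⟨k, hk⟩ := hTL 0 1; simp at hk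
    exact ⟨k - k_d2 + k_b2, by push_cast; linear_combination hk - hk_d2 + hk_b2⟩
  have g_ac : ∃ k : ℤ, n * n * (a*c) = k := by
    obtain ⟨k, hk⟩ := hTL 1 0; simp at hk
    exact ⟨-k + k_a2 - k_c2, by push_cast; linear_combination -hk + hk_a2 - hk_c2⟩
  have g_bc : ∃ k : ℤ, n * n * (b*c) = k := by
    obtain ⟨k, hk⟩ := hTL 1 1; simp at hk
    exact ⟨1 - k + k_ab - k_cd, by push_cast; linear_combination -hk + hk_ab - hk_cd⟩
  -- choose a nonzero entry
  have hkey : ∃ i₀ j₀ : Fin 2, (!![a,b;c,d] : Matrix (Fin 2) (Fin 2) ℝ) i₀ j₀ ≠ 0 ∧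
      ∀ i j, ∃ k : ℤ, n * n * ((!![a,b;c,d] : Matrix (Fin 2) (Fin 2) ℝ) i₀ j₀ * (!![a,b;c,d] : Matrix (Fin 2) (Fin 2) ℝ) i j) = k := by
    rcases eq_or_ne a 0 with ha0 | ha0
    · have hb0 : b ≠ 0 := by
        intro hb0; rw [ha0, hb0] at hdet; simp at hdet
      refine ⟨0, 1, hb0, ?_⟩
      intro i j
      fin_cases i <;> fin_cases j
      · refine ⟨N * k_ab, ?_⟩; simp; push_cast; linear_combination n * hk_ab
      · refine ⟨N * k_b2, ?_⟩; simp; push_cast; linear_combination n * hk_b2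
      · obtain ⟨k, hk⟩ := g_bc; refine ⟨k, ?_⟩; simp; linear_combination hk
      · obtain ⟨k, hk⟩ := g_bd; refine ⟨k, ?_⟩; simp; linear_combination hk
    · refine ⟨0, 0, ha0, ?_⟩
      intro i j
      fin_cases i <;> fin_cases j
      · refine ⟨N * k_a2, ?_⟩; simp; push_cast; linear_combination n * hk_a2
      · refine ⟨N * k_ab, ?_⟩; simp; push_cast; linear_combination n * hk_ab
      · obtain ⟨k, hk⟩ := g_ac; refine ⟨k, ?_⟩; simp; linear_combination hk
      · obtain ⟨k, hk⟩ := g_ad; refine ⟨k, ?_⟩; simp; linear_combination hk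
  obtain ⟨i₀, j₀, hp0, hkey⟩ := hkey
  choose B0 hB using hkey
  set B : Matrix (Fin 2) (Fin 2) ℤ := Matrix.of B0 with hBdef
  have hB : ∀ i j, n * n * ((!![a,b;c,d] : Matrix (Fin 2) (Fin 2) ℝ) i₀ j₀ * (!![a,b;c,d] : Matrix (Fin 2) (Fin 2) ℝ) i j) = (B i j : ℝ) := hB
  set p := (!![a,b;c,d] : Matrix (Fin 2) (Fin 2) ℝ) i₀ j₀ with hp
  have hBii : (0:ℝ) < (B i₀ j₀ : ℝ) := by
    rw [← hB i₀ j₀]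
    exact mul_pos (mul_pos hnpos hnpos) (mul_self_pos.mpr hp0)
  have hBipos : 0 < B i₀ j₀ := by exact_mod_cast hBii
  refine ⟨N * N * (B i₀ j₀).toNat, ?_, ?_⟩
  · exact Nat.mul_pos (Nat.mul_pos hNpos hNpos) (by omega)
  · have hBr : (((B i₀ j₀).toNat : ℕ) : ℝ) = ((B i₀ j₀ : ℤ) : ℝ) := by
      exact_mod_cast congrArg (fun z : ℤ => (z : ℝ)) (Int.toNat_of_nonneg hBipos.le)
    have hmcast : ((N * N * (B i₀ j₀).toNat : ℕ) : ℝ) = (n * n * p)^2 := by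
      push_cast
      rw [hBr, ← hB i₀ j₀]
      push_cast
      ring
    have hsqrt : Real.sqrt ((N * N * (B i₀ j₀).toNat : ℕ) : ℝ) = n * n * |p| := by
      rw [hmcast, Real.sqrt_sq_eq_abs, abs_mul, abs_mul, abs_of_pos hnpos]
    rcases lt_or_gt_of_ne hp0 with hneg | hpos
    · refine ⟨-B, ?_, ?_⟩
      · ext i j
        simp only [Matrix.smul_apply, smul_eq_mul, Matrix.map_apply, Matrix.neg_apply]
        rw [hsqrt, abs_of_neg hneg]
        push_cast
        linear_combination -(hB i j)
      · have h1 : ((-B).map (Int.cast : ℤ → ℝ)).det = ((N * N * (B i₀ j₀).toNat : ℕ) : ℝ) := by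
          rw [show ((-B).map (Int.cast : ℤ → ℝ)) = Real.sqrt ((N * N * (B i₀ j₀).toNat : ℕ) : ℝ) • (!![a,b;c,d] : Matrix (Fin 2) (Fin 2) ℝ) from ?_]
          · rw [Matrix.det_smul, hP]
            simp only [Fintype.card_fin, mul_one]
            exact Real.sq_sqrt (by positivity : (0:ℝ) ≤ ((N * N * (B i₀ j₀).toNat : ℕ) : ℝ))
          · ext i j
            simp only [Matrix.smul_apply, smul_eq_mul, Matrix.map_apply, Matrix.neg_apply]
            rw [hsqrt, abs_of_neg hneg]
            push_cast
            linear_combination (hB i j)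
        rw [Matrix.det_fin_two] at h1
        simp only [Matrix.map_apply] at h1
        rw [Matrix.det_fin_two]
        exact_mod_cast h1
    · refine ⟨B, ?_, ?_⟩
      · ext i j
        simp only [Matrix.smul_apply, smul_eq_mul, Matrix.map_apply]
        rw [hsqrt, abs_of_pos hpos]
        linear_combination hB i j
      · have h1 : (B.map (Int.cast : ℤ → ℝ)).det = ((N * N * (B i₀ j₀).toNat : ℕ) : ℝ) := by
          rw [show (B.map (Int.cast : ℤ → ℝ)) = Real.sqrt ((N * N * (B i₀ j₀).toNat : ℕ) : ℝ) • (!![a,b;c,d] : Matrix (Fin 2) (Fin 2) ℝ) from ?_]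
          · rw [Matrix.det_smul, hP]
            simp only [Fintype.card_fin, mul_one]
            exact Real.sq_sqrt (by positivity : (0:ℝ) ≤ ((N * N * (B i₀ j₀).toNat : ℕ) : ℝ))
          · ext i j
            simp only [Matrix.smul_apply, smul_eq_mul, Matrix.map_apply]
            rw [hsqrt, abs_of_pos hpos]
            linear_combination -(hB i j)
        rw [Matrix.det_fin_two] at h1
        simp only [Matrix.map_apply] at h1
        rw [Matrix.det_fin_two]
        exact_mod_cast h1
end

section
/- Let G be a subgroup of SL₂(ℤ) of finite index. Then there exist finitely many matrices P₁, …, P_N ∈ SL₂(ℝ) such that every P ∈ SL₂(ℝ) with the property that P⁻¹·A·P has integer entries for all A ∈ G can be written as P = P_j·X for some j ∈ {1, …, N} and some X ∈ SL₂(ℤ). Equivalently, N(G) is finite for every finite-index subgroup G of SL₂(ℤ). -/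
open Matrix MatrixGroups

section Stmt5Aux

noncomputable section

abbrev mp (X : SL(2,ℤ)) : Matrix (Fin 2) (Fin 2) ℝ :=
  ((X : Matrix (Fin 2) (Fin 2) ℤ)).map (Int.cast : ℤ → ℝ)

lemma map_cast_mul (A B : Matrix (Fin 2) (Fin 2) ℤ) :
    (A * B).map (Int.cast : ℤ → ℝ) = A.map (Int.cast : ℤ → ℝ) * B.map (Int.cast : ℤ → ℝ) := by
  rw [show (Int.cast : ℤ → ℝ) = ⇑(Int.castRingHom ℝ) from rfl, Matrix.map_mul]

lemma mp_mul (X Y : SL(2,ℤ)) : mp (X * Y) = mp X * mp Y := by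
  rw [mp, Matrix.SpecialLinearGroup.coe_mul, map_cast_mul]

lemma mp_one : mp 1 = 1 := by
  rw [mp, Matrix.SpecialLinearGroup.coe_one]
  exact Matrix.map_one _ Int.cast_zero Int.cast_one

lemma mp_det (X : SL(2,ℤ)) : (mp X).det = 1 := by
  have := (RingHom.map_det (Int.castRingHom ℝ) (X : Matrix (Fin 2) (Fin 2) ℤ)).symm
  simp only [RingHom.mapMatrix_apply] at this
  rw [mp, show (Int.cast : ℤ → ℝ) = ⇑(Int.castRingHom ℝ) from rfl, this]
  simp

lemma isInt_mp (X : SL(2,ℤ)) : IsIntegerMatrix (mp X) :=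
  fun i j => ⟨(X : Matrix (Fin 2) (Fin 2) ℤ) i j, rfl⟩

lemma isInt_mul {A B : Matrix (Fin 2) (Fin 2) ℝ} (hA : IsIntegerMatrix A)
    (hB : IsIntegerMatrix B) : IsIntegerMatrix (A * B) := by
  choose a ha using hA
  choose b hb using hB
  have hA' : A = (Matrix.of a).map (Int.cast : ℤ → ℝ) := by ext i j; exact ha i j
  have hB' : B = (Matrix.of b).map (Int.cast : ℤ → ℝ) := by ext i j; exact hb i j
  rw [hA', hB', ← map_cast_mul]
  exact fun i j => ⟨_, rfl⟩

lemma inv_two (A : Matrix (Fin 2) (Fin 2) ℝ) (h : A.det = 1) :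
    A⁻¹ = !![A 1 1, -(A 0 1); -(A 1 0), A 0 0] := by
  rw [Matrix.inv_def, h, Matrix.adjugate_fin_two]
  simp

lemma map_explicit (a b c d : ℤ) :
    (!![a, b; c, d]).map (Int.cast : ℤ → ℝ) = !![(a:ℝ), b; c, d] := by
  ext i j
  fin_cases i <;> fin_cases j <;> simp

def upp : SL(2,ℤ) := ⟨!![1,1;0,1], by simp [Matrix.det_fin_two_of]⟩
def low : SL(2,ℤ) := ⟨!![1,0;1,1], by simp [Matrix.det_fin_two_of]⟩
def shift (t : ℤ) : SL(2,ℤ) := ⟨!![1,t;0,1], by simp [Matrix.det_fin_two_of]⟩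
def neg1 : SL(2,ℤ) := ⟨!![-1,0;0,-1], by simp [Matrix.det_fin_two_of]⟩

lemma coe_upp_pow (n : ℕ) :
    ((upp ^ n : SL(2,ℤ)) : Matrix (Fin 2) (Fin 2) ℤ) = !![1,(n:ℤ);0,1] := by
  induction n with
  | zero => simp [Matrix.one_fin_two]
  | succ n ih =>
      rw [pow_succ, Matrix.SpecialLinearGroup.coe_mul, ih]
      show _ * (!![1,1;0,1]) = _
      rw [Matrix.mul_fin_two]
      norm_num [add_comm]

lemma coe_low_pow (n : ℕ) :
    ((low ^ n : SL(2,ℤ)) : Matrix (Fin 2) (Fin 2) ℤ) = !![1,0;(n:ℤ),1] := by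
  induction n with
  | zero => simp [Matrix.one_fin_two]
  | succ n ih =>
      rw [pow_succ, Matrix.SpecialLinearGroup.coe_mul, ih]
      show _ * (!![1,0;1,1]) = _
      rw [Matrix.mul_fin_two]
      norm_num [add_comm]

lemma tri (k m : ℕ) (a c : ℝ) (ha : a ≠ 0)
    (hU : IsIntegerMatrix ((!![a,c;0,a⁻¹])⁻¹ * !![(1:ℝ),(k:ℝ);0,1] * !![a,c;0,a⁻¹]))
    (hL : IsIntegerMatrix ((!![a,c;0,a⁻¹])⁻¹ * !![(1:ℝ),0;(m:ℝ),1] * !![a,c;0,a⁻¹])) :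
    (∃ j:ℤ, (k:ℝ)*(a⁻¹*a⁻¹) = j) ∧ (∃ l:ℤ, (m:ℝ)*(a*a) = l) ∧ (∃ i:ℤ, (m:ℝ)*(a*c) = i) := by
  have hdet : (!![a,c;0,a⁻¹]).det = 1 := by
    simp [Matrix.det_fin_two_of, mul_inv_cancel₀ ha]
  have hinv : (!![a,c;0,a⁻¹])⁻¹ = !![a⁻¹, -c; 0, a] := by
    rw [inv_two _ hdet]; congr 1 <;> simp
  rw [hinv] at hU hL
  obtain ⟨j, hj⟩ := hU 0 1
  obtain ⟨l, hl⟩ := hL 1 0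
  obtain ⟨i, hi⟩ := hL 1 1
  simp [Matrix.mul_apply, Fin.sum_univ_two] at hj hl hi
  refine ⟨⟨j, by linear_combination hj⟩, ⟨l, by linear_combination hl⟩,
    ⟨i - 1, by push_cast; linear_combination hi - mul_inv_cancel₀ ha⟩⟩

lemma keyP (k : ℕ) (P : Matrix (Fin 2) (Fin 2) ℝ) (hdet : P.det = 1)
    (hU : IsIntegerMatrix (P⁻¹ * !![(1:ℝ),(k:ℝ);0,1] * P)) :
    (∃ e:ℤ, (k:ℝ) * (P 1 0 * P 1 1) = e) ∧ (∃ f:ℤ, (k:ℝ) * (P 1 0 * P 1 0) = f) := by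
  rw [inv_two P hdet] at hU
  obtain ⟨e, he⟩ := hU 0 0
  obtain ⟨f, hf⟩ := hU 1 0
  simp [Matrix.mul_apply, Fin.sum_univ_two] at he hf
  have hd : P 0 0 * P 1 1 - P 0 1 * P 1 0 = 1 := by
    rw [← Matrix.det_fin_two]; exact hdet
  exact ⟨⟨e - 1, by push_cast; linear_combination he - hd⟩,
    ⟨-f, by push_cast; linear_combination -hf⟩⟩

lemma transfer (P : Matrix (Fin 2) (Fin 2) ℝ) (hP : P.det = 1)
    (A : Matrix (Fin 2) (Fin 2) ℝ) (X : SL(2,ℤ))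
    (h : IsIntegerMatrix (P⁻¹ * A * P)) :
    IsIntegerMatrix ((P * mp X)⁻¹ * A * (P * mp X)) := by
  have hPinv : P⁻¹ * P = 1 := Matrix.nonsing_inv_mul P (by rw [hP]; exact isUnit_one)
  have hE : mp X⁻¹ * mp X = 1 := by rw [← mp_mul, inv_mul_cancel, mp_one]
  have hinv : (P * mp X)⁻¹ = mp X⁻¹ * P⁻¹ := by
    apply Matrix.inv_eq_left_inv
    rw [Matrix.mul_assoc, ← Matrix.mul_assoc P⁻¹, hPinv, Matrix.one_mul, hE]
  rw [hinv]
  have : mp X⁻¹ * P⁻¹ * A * (P * mp X) = mp X⁻¹ * (P⁻¹ * A * P) * mp X := by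
    simp only [Matrix.mul_assoc]
  rw [this]
  exact isInt_mul (isInt_mul (isInt_mp _) h) (isInt_mp _)

lemma canon (k : ℕ) (hk : 0 < k) (P : Matrix (Fin 2) (Fin 2) ℝ) (hdet : P.det = 1)
    (hU : IsIntegerMatrix (P⁻¹ * !![(1:ℝ),(k:ℝ);0,1] * P)) :
    ∃ (X : SL(2,ℤ)) (a c : ℝ), 0 < a ∧ 0 ≤ c ∧ c < a ∧ P * mp X = !![a, c; 0, a⁻¹] := by
  -- Step 1: a coprime integer vector in the kernel of the bottom row
  obtain ⟨x, y, u, v, huv, hker⟩ :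
      ∃ x y u v : ℤ, u*x + v*y = 1 ∧ P 1 0 * (x:ℝ) + P 1 1 * (y:ℝ) = 0 := by
    by_cases hr : P 1 0 = 0
    · exact ⟨1, 0, 1, 0, by ring, by simp [hr]⟩
    by_cases hs : P 1 1 = 0
    · exact ⟨0, 1, 0, 1, by ring, by simp [hs]⟩
    obtain ⟨⟨e, he⟩, ⟨f, hf⟩⟩ := keyP k P hdet hU
    have hkR : (k:ℝ) ≠ 0 := Nat.cast_ne_zero.mpr hk.ne'
    have heR : (e:ℝ) ≠ 0 := by
      rw [← he]; exact mul_ne_zero hkR (mul_ne_zero hr hs)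
    have he0 : e ≠ 0 := fun h => heR (by rw [h]; simp)
    have hgpos : 0 < Int.gcd e f := Int.gcd_pos_iff.mpr (Or.inl he0)
    set g : ℤ := (Int.gcd e f : ℤ) with hg
    have hgR : (g:ℝ) ≠ 0 := by
      simp only [hg]
      exact_mod_cast (Int.natCast_pos.mpr hgpos).ne'
    have hE : e / g * g = e := Int.ediv_mul_cancel (Int.gcd_dvd_left e f)
    have hF : f / g * g = f := Int.ediv_mul_cancel (Int.gcd_dvd_right e f)
    have hco : Int.gcd (-(e/g)) (f/g) = 1 := by
      rw [Int.neg_gcd]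
      exact Int.gcd_div_gcd_div_gcd hgpos
    obtain ⟨u, v, huv⟩ := Int.isCoprime_iff_gcd_eq_one.mpr hco
    refine ⟨-(e/g), f/g, u, v, huv, ?_⟩
    have key : (f:ℝ) * P 1 1 = (e:ℝ) * P 1 0 := by linear_combination P 1 0 * he - P 1 1 * hf
    have hE' : ((e/g : ℤ):ℝ) * g = e := by exact_mod_cast congrArg (Int.cast : ℤ → ℝ) hE
    have hF' : ((f/g : ℤ):ℝ) * g = f := by exact_mod_cast congrArg (Int.cast : ℤ → ℝ) hF
    have hmain : (g:ℝ) * (P 1 0 * ((-(e/g) : ℤ):ℝ) + P 1 1 * ((f/g : ℤ):ℝ)) = 0 := by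
      push_cast
      push_cast at hE' hF'
      linear_combination (-(P 1 0)) * hE' + P 1 1 * hF' + key
    exact (mul_eq_zero.mp hmain).resolve_left hgR
  -- Step 2: kill the bottom-left entry
  set X₀ : SL(2,ℤ) := ⟨!![x, -v; y, u], by
    rw [Matrix.det_fin_two_of]; linear_combination huv⟩ with hX₀
  have hcoe : (X₀ : Matrix (Fin 2) (Fin 2) ℤ) = !![x, -v; y, u] := rfl
  have h10 : (P * mp X₀) 1 0 = 0 := by
    rw [Matrix.mul_apply]
    rw [Fin.sum_univ_two]
    simp only [mp, hcoe, Matrix.map_apply]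
    simpa using hker
  have hdet0 : (P * mp X₀).det = 1 := by
    rw [Matrix.det_mul, hdet, mp_det, one_mul]
  set Q₀ := P * mp X₀ with hQ₀def
  have had : Q₀ 0 0 * Q₀ 1 1 = 1 := by
    have := Matrix.det_fin_two Q₀
    rw [hdet0, h10] at this
    linear_combination -this
  have ha0 : Q₀ 0 0 ≠ 0 := left_ne_zero_of_mul_eq_one had
  have hQ0 : Q₀ = !![Q₀ 0 0, Q₀ 0 1; 0, (Q₀ 0 0)⁻¹] := by
    have h11 : Q₀ 1 1 = (Q₀ 0 0)⁻¹ := by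
      field_simp
      linear_combination had
    rw [← h11, ← h10]
    exact Matrix.eta_fin_two Q₀
  -- Step 3: make the top-left entry positive
  obtain ⟨X₁, a, b, hapos, hQ1⟩ :
      ∃ (X₁ : SL(2,ℤ)) (a b : ℝ), 0 < a ∧ P * mp X₁ = !![a, b; 0, a⁻¹] := by
    rcases ha0.lt_or_gt with hneg | hpos
    · refine ⟨X₀ * neg1, -(Q₀ 0 0), -(Q₀ 0 1), by linarith, ?_⟩
      rw [mp_mul, ← Matrix.mul_assoc, ← hQ₀def, hQ0]
      have hmn : mp neg1 = !![(-1:ℝ), 0; 0, -1] := by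
        rw [mp, show (neg1 : Matrix (Fin 2) (Fin 2) ℤ) = !![-1,0;0,-1] from rfl, map_explicit]
        norm_num
      rw [hmn, Matrix.mul_fin_two]
      ext i j
      fin_cases i <;> fin_cases j <;> simp [inv_neg] <;> ring
    · exact ⟨X₀, Q₀ 0 0, Q₀ 0 1, hpos, hQ0⟩
  -- Step 4: reduce the top-right entry mod a
  set t : ℤ := ⌊b / a⌋ with ht
  refine ⟨X₁ * shift (-t), a, b - a * t, hapos, ?_, ?_, ?_⟩
  · have h1 : (t:ℝ) ≤ b / a := Int.floor_le _
    have h2 : (t:ℝ) * a ≤ (b/a) * a := mul_le_mul_of_nonneg_right h1 hapos.le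
    rw [div_mul_cancel₀ _ hapos.ne'] at h2
    linarith
  · have h1 : b / a < (t:ℝ) + 1 := Int.lt_floor_add_one _
    have h2 : (b/a) * a < ((t:ℝ) + 1) * a := mul_lt_mul_of_pos_right h1 hapos
    rw [div_mul_cancel₀ _ hapos.ne'] at h2
    linarith
  · rw [mp_mul, ← Matrix.mul_assoc, hQ1]
    have hms : mp (shift (-t)) = !![(1:ℝ), -(t:ℝ); 0, 1] := by
      rw [mp, show ((shift (-t)) : Matrix (Fin 2) (Fin 2) ℤ) = !![1,-t;0,1] from rfl, map_explicit]
      norm_num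
    rw [hms, Matrix.mul_fin_two]
    ext i j
    fin_cases i <;> fin_cases j <;> simp <;> ring

end
end Stmt5Aux

/-- For a finite-index subgroup `G ≤ SL₂(ℤ)`, the matrices `P ∈ SL₂(ℝ)` with
`P⁻¹·G·P ⊆ SL₂(ℤ)` fall into finitely many cosets of `SL₂(ℤ)`; i.e. `N(G)` is finite. -/
theorem stmt_5 (G : Subgroup SL(2, ℤ)) (hG : G.FiniteIndex) :
    ∃ (N : ℕ) (Ps : Fin N → Matrix (Fin 2) (Fin 2) ℝ),
      (∀ j, (Ps j).det = 1) ∧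
      ∀ P : Matrix (Fin 2) (Fin 2) ℝ, P.det = 1 →
        (∀ A ∈ G,
          IsIntegerMatrix (P⁻¹ * ((A : Matrix (Fin 2) (Fin 2) ℤ)).map (Int.cast : ℤ → ℝ) * P)) →
        ∃ j : Fin N, ∃ X : SL(2, ℤ),
          P = Ps j * ((X : Matrix (Fin 2) (Fin 2) ℤ)).map (Int.cast : ℤ → ℝ) := by
  classical
  obtain ⟨k, hkpos, -, hUk⟩ :=
    Subgroup.exists_pow_mem_of_index_ne_zero hG.index_ne_zero upp
  obtain ⟨m, hmpos, -, hLm⟩ :=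
    Subgroup.exists_pow_mem_of_index_ne_zero hG.index_ne_zero low
  have hmR : (0:ℝ) < (m:ℝ) := by exact_mod_cast hmpos
  set D : Finset (ℤ × ℤ) :=
    Finset.Icc 1 ((m:ℤ)*(k:ℤ)) ×ˢ Finset.Ico 0 ((m:ℤ)*(k:ℤ)) with hD
  set f : ℤ × ℤ → Matrix (Fin 2) (Fin 2) ℝ := fun li =>
    !![Real.sqrt ((li.1 : ℝ) / (m:ℝ)), (li.2 : ℝ) / ((m:ℝ) * Real.sqrt ((li.1:ℝ)/(m:ℝ)));
       0, (Real.sqrt ((li.1:ℝ)/(m:ℝ)))⁻¹] with hf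
  have hsqrtpos : ∀ li : ℤ × ℤ, li ∈ D → 0 < Real.sqrt ((li.1 : ℝ) / (m:ℝ)) := by
    rintro ⟨l, i⟩ hmem
    simp only [hD, Finset.mem_product, Finset.mem_Icc, Finset.mem_Ico] at hmem
    apply Real.sqrt_pos.mpr
    apply div_pos _ hmR
    exact_mod_cast lt_of_lt_of_le zero_lt_one hmem.1.1
  refine ⟨D.card, fun j => f (D.equivFin.symm j), ?_, ?_⟩
  · intro j
    have hpos := hsqrtpos (↑(D.equivFin.symm j)) (D.equivFin.symm j).2
    simp only [hf, Matrix.det_fin_two_of, mul_zero, sub_zero]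
    exact mul_inv_cancel₀ hpos.ne'
  · intro P hdet hInt
    have hU := hInt (upp ^ k) hUk
    have hL := hInt (low ^ m) hLm
    have eU : ((upp ^ k : SL(2,ℤ)) : Matrix (Fin 2) (Fin 2) ℤ).map (Int.cast : ℤ → ℝ)
        = !![(1:ℝ), (k:ℝ); 0, 1] := by
      rw [coe_upp_pow, map_explicit]; norm_num
    have eL : ((low ^ m : SL(2,ℤ)) : Matrix (Fin 2) (Fin 2) ℤ).map (Int.cast : ℤ → ℝ)
        = !![(1:ℝ), 0; (m:ℝ), 1] := by
      rw [coe_low_pow, map_explicit]; norm_num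
    rw [eU] at hU
    rw [eL] at hL
    obtain ⟨X, a, c, hapos, hc0, hca, hQ⟩ := canon k hkpos P hdet hU
    have hU' := transfer P hdet _ X hU
    have hL' := transfer P hdet _ X hL
    rw [hQ] at hU' hL'
    obtain ⟨⟨j, hj⟩, ⟨l, hl⟩, ⟨i, hi⟩⟩ := tri k m a c hapos.ne' hU' hL'
    have haR : a ≠ 0 := hapos.ne'
    have hkR : (0:ℝ) < (k:ℝ) := by exact_mod_cast hkpos
    have hl1 : 1 ≤ l := by
      have : (0:ℝ) < (l:ℝ) := by rw [← hl]; positivity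
      exact_mod_cast this
    have hj1 : 1 ≤ j := by
      have : (0:ℝ) < (j:ℝ) := by
        rw [← hj]
        have : 0 < a⁻¹ := inv_pos.mpr hapos
        positivity
      exact_mod_cast this
    have hlj : l * j = (m:ℤ) * (k:ℤ) := by
      have hx : a * a⁻¹ = 1 := mul_inv_cancel₀ haR
      have : ((l:ℝ)) * (j:ℝ) = (m:ℝ) * (k:ℝ) := by
        rw [← hl, ← hj]
        linear_combination ((m:ℝ)*(k:ℝ)*(a*a⁻¹) + (m:ℝ)*(k:ℝ)) * hx
      exact_mod_cast this
    have hlmk : l ≤ (m:ℤ) * (k:ℤ) := by nlinarith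
    have hi0 : 0 ≤ i := by
      have : (0:ℝ) ≤ (i:ℝ) := by
        rw [← hi]; positivity
      exact_mod_cast this
    have hil : i < l := by
      have : (i:ℝ) < (l:ℝ) := by
        rw [← hi, ← hl]
        have := mul_pos hmR hapos
        nlinarith
      exact_mod_cast this
    have hmem : (l, i) ∈ D := by
      simp only [hD, Finset.mem_product, Finset.mem_Icc, Finset.mem_Ico]
      omega
    have hsq : Real.sqrt ((l:ℝ) / (m:ℝ)) = a := by
      rw [show ((l:ℝ)) / (m:ℝ) = a^2 by rw [div_eq_iff hmR.ne', ← hl]; ring]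
      exact Real.sqrt_sq hapos.le
    have hcc : (i:ℝ) / ((m:ℝ) * a) = c := by
      rw [← hi]; field_simp
    have hfli : f (l, i) = !![a, c; 0, a⁻¹] := by
      simp only [hf]
      rw [hsq, hcc]
    refine ⟨D.equivFin ⟨(l,i), hmem⟩, X⁻¹, ?_⟩
    have hPs : f (↑(D.equivFin.symm (D.equivFin ⟨(l,i), hmem⟩))) = !![a, c; 0, a⁻¹] := by
      rw [Equiv.symm_apply_apply]
      exact hfli
    show P = f (↑(D.equivFin.symm (D.equivFin ⟨(l,i), hmem⟩))) * mp X⁻¹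
    rw [hPs, ← hQ, Matrix.mul_assoc, ← mp_mul, mul_inv_cancel, mp_one, Matrix.mul_one]
end

section
/- Let (A_i) be a sequence in SL₂(ℤ) with entries A_i = [[a_i, b_i], [c_i, d_i]], and let (λ_i) be a sequence of positive reals with λ_i → ∞. Set P_i = [[λ_i, 0], [0, λ_i⁻¹]] and suppose the conjugates P_i⁻¹·A_i·P_i = [[a_i, λ_i⁻²·b_i], [λ_i²·c_i, d_i]] converge entrywise to a matrix A. Then: (a) for all sufficiently large i one has c_i = 0 and a_i = d_i ∈ {1, −1}; and (b) there exist ε ∈ {1, −1} and b ∈ ℝ such that A = ε·[[1, b], [0, 1]]. -/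
open Matrix Filter

/-- If `A_i = [[a_i, b_i], [c_i, d_i]] ∈ SL₂(ℤ)`, `λ_i → ∞`, and the conjugates
`P_i⁻¹·A_i·P_i = [[a_i, λ_i⁻²b_i], [λ_i²c_i, d_i]]` converge entrywise to `A`, then
eventually `c_i = 0` and `a_i = d_i = ±1`, and `A = ±[[1, b], [0, 1]]`. -/
theorem stmt_7 (a b c d : ℕ → ℤ) (hdet : ∀ i, a i * d i - b i * c i = 1)
    (lam : ℕ → ℝ) (hpos : ∀ i, 0 < lam i) (hlam : Tendsto lam atTop atTop)
    (A : Matrix (Fin 2) (Fin 2) ℝ)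
    (hconv : ∀ p q : Fin 2,
      Tendsto (fun i => (!![(a i : ℝ), (lam i)⁻¹ ^ 2 * (b i : ℝ);
        (lam i) ^ 2 * (c i : ℝ), (d i : ℝ)]) p q) atTop (nhds (A p q))) :
    (∀ᶠ i in atTop, c i = 0 ∧ a i = d i ∧ (a i = 1 ∨ a i = -1)) ∧
    ∃ ε : ℝ, (ε = 1 ∨ ε = -1) ∧ ∃ β : ℝ, A = ε • !![1, β; 0, 1] := by
  have h00 : Tendsto (fun i => (a i : ℝ)) atTop (nhds (A 0 0)) := by
    simpa using hconv 0 0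
  have h10 : Tendsto (fun i => (lam i) ^ 2 * (c i : ℝ)) atTop (nhds (A 1 0)) := by
    simpa using hconv 1 0
  have h11 : Tendsto (fun i => (d i : ℝ)) atTop (nhds (A 1 1)) := by
    simpa using hconv 1 1
  -- boundedness of λ² c
  have hbdd : ∀ᶠ i in atTop, |(lam i) ^ 2 * (c i : ℝ)| ≤ |A 1 0| + 1 := by
    have := h10.eventually (Metric.ball_mem_nhds (A 1 0) one_pos)
    filter_upwards [this] with i hi
    have : |(lam i) ^ 2 * (c i : ℝ) - A 1 0| < 1 := by
      simpa [Real.dist_eq] using hi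
    calc |(lam i) ^ 2 * (c i : ℝ)| = |(lam i) ^ 2 * (c i : ℝ) - A 1 0 + A 1 0| := by ring_nf
      _ ≤ |(lam i) ^ 2 * (c i : ℝ) - A 1 0| + |A 1 0| := abs_add_le _ _
      _ ≤ |A 1 0| + 1 := by linarith
  have hlam2 : Tendsto (fun i => (lam i) ^ 2) atTop atTop :=
    (hlam.atTop_mul_atTop₀ hlam).congr fun i => (sq (lam i)).symm
  have hbig : ∀ᶠ i in atTop, |A 1 0| + 1 < (lam i) ^ 2 :=
    hlam2.eventually_gt_atTop _
  have hc0 : ∀ᶠ i in atTop, c i = 0 := by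
    filter_upwards [hbdd, hbig] with i hb hg
    by_contra hne
    have h1 : (1 : ℝ) ≤ |(c i : ℝ)| := by
      have : (1 : ℤ) ≤ |c i| := Int.one_le_abs hne
      exact_mod_cast (by exact_mod_cast this : (1:ℝ) ≤ (|c i| : ℝ))
    have hl : (0:ℝ) < (lam i) ^ 2 := pow_pos (hpos i) 2
    have : (lam i) ^ 2 ≤ |(lam i) ^ 2 * (c i : ℝ)| := by
      rw [abs_mul, abs_of_pos hl]
      nlinarith
    linarith
  have hev : ∀ᶠ i in atTop, c i = 0 ∧ a i = d i ∧ (a i = 1 ∨ a i = -1) := by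
    filter_upwards [hc0] with i hci
    have hd : a i * d i = 1 := by have := hdet i; rw [hci] at this; linarith
    rcases Int.mul_eq_one_iff_eq_one_or_neg_one.mp hd with ⟨h1, h2⟩ | ⟨h1, h2⟩ <;>
      exact ⟨hci, by omega, by omega⟩
  refine ⟨hev, ?_⟩
  -- A 1 0 = 0
  have hA10 : A 1 0 = 0 := by
    have : Tendsto (fun _ : ℕ => (0:ℝ)) atTop (nhds (A 1 0)) := by
      refine h10.congr' ?_
      filter_upwards [hc0] with i hi; simp [hi]
    exact tendsto_nhds_unique this tendsto_const_nhds
  -- ε = A 0 0 ∈ {1, -1}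
  have hεmem : A 0 0 = 1 ∨ A 0 0 = -1 := by
    have hclosed : IsClosed {x : ℝ | x = 1 ∨ x = -1} := by
      have : {x : ℝ | x = 1 ∨ x = -1} = {1, -1} := by ext x; simp [Set.mem_insert_iff]
      rw [this]; exact (Set.toFinite _).isClosed
    have hmem : ∀ᶠ i in atTop, ((a i : ℝ)) ∈ {x : ℝ | x = 1 ∨ x = -1} := by
      filter_upwards [hev] with i ⟨_, _, h⟩
      rcases h with h | h <;> simp [h]
    exact hclosed.mem_of_tendsto h00 hmem
  have hA11 : A 1 1 = A 0 0 := by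
    have : Tendsto (fun i => (a i : ℝ)) atTop (nhds (A 1 1)) := by
      refine h11.congr' ?_
      filter_upwards [hev] with i ⟨_, h, _⟩; simp [h]
    exact tendsto_nhds_unique this h00
  refine ⟨A 0 0, hεmem, A 0 0 * A 0 1, ?_⟩
  have hsq : A 0 0 * A 0 0 = 1 := by rcases hεmem with h | h <;> rw [h] <;> ring
  ext p q
  fin_cases p <;> fin_cases q <;> simp [Matrix.smul_apply, hA10, hA11]
  rw [← mul_assoc, hsq, one_mul]
end

section
/- Let D ⊆ ℂ be a nonempty connected open set, and let τ, h : D → ℂ be holomorphic functions such that Im τ(z) > 0 for all z ∈ D, h(z) ≠ 0 for all z ∈ D, and the derivative h′ is not identically zero on D. If the real-valued function z ↦ Im(τ(z))/|h(z)|² is harmonic on D (its Laplacian vanishes identically), then there exist a real number r and a nonzero complex number c such that h(z) = c·(τ(z) − r) for all z ∈ D. -/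
open Complex

lemma hasFDerivAt_immulconj {f g : ℂ → ℂ} {a b : ℂ} {z : ℂ}
    (hf : HasDerivAt f a z) (hg : HasDerivAt g b z) :
    HasFDerivAt (fun w => (f w * (starRingEnd ℂ) (g w)).im)
      (Complex.imCLM.comp
        ((f z • (Complex.conjCLE.toContinuousLinearMap.comp
            ((ContinuousLinearMap.smulRight (1 : ℂ →L[ℂ] ℂ) b).restrictScalars ℝ))) +
          (((ContinuousLinearMap.smulRight (1 : ℂ →L[ℂ] ℂ) a).restrictScalars ℝ).smulRight
            ((starRingEnd ℂ) (g z))))) z := by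
  have hf' : HasFDerivAt f ((ContinuousLinearMap.smulRight (1 : ℂ →L[ℂ] ℂ) a).restrictScalars ℝ) z :=
    hf.hasFDerivAt.restrictScalars ℝ
  have hg' : HasFDerivAt g ((ContinuousLinearMap.smulRight (1 : ℂ →L[ℂ] ℂ) b).restrictScalars ℝ) z :=
    hg.hasFDerivAt.restrictScalars ℝ
  have hcg : HasFDerivAt (fun w => (starRingEnd ℂ) (g w))
      (Complex.conjCLE.toContinuousLinearMap.comp
        ((ContinuousLinearMap.smulRight (1 : ℂ →L[ℂ] ℂ) b).restrictScalars ℝ)) z :=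
    (Complex.conjCLE.toContinuousLinearMap.hasFDerivAt).comp z hg'
  exact Complex.imCLM.hasFDerivAt.comp z (hf'.mul' hcg)

lemma fderiv_immulconj {f g : ℂ → ℂ} {a b : ℂ} {z : ℂ}
    (hf : HasDerivAt f a z) (hg : HasDerivAt g b z) (v : ℂ) :
    fderiv ℝ (fun w => (f w * (starRingEnd ℂ) (g w)).im) z v
      = (a * v * (starRingEnd ℂ) (g z) + f z * (starRingEnd ℂ) (b * v)).im := by
  rw [(hasFDerivAt_immulconj hf hg).fderiv]
  simp [Complex.add_im]
  ring

/-- The Laplacian `∂²u/∂x² + ∂²u/∂y²` of a function `u : ℂ → ℝ`. -/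
noncomputable def laplacian (u : ℂ → ℝ) (z : ℂ) : ℝ :=
  fderiv ℝ (fun w => fderiv ℝ u w 1) z 1 +
    fderiv ℝ (fun w => fderiv ℝ u w Complex.I) z Complex.I

lemma laplacian_immulconj {f g : ℂ → ℂ} {s : Set ℂ} (hs : IsOpen s)
    (hf : AnalyticOnNhd ℂ f s) (hg : AnalyticOnNhd ℂ g s) {z : ℂ} (hz : z ∈ s) :
    laplacian (fun w => (f w * (starRingEnd ℂ) (g w)).im) z
      = 4 * (deriv f z * (starRingEnd ℂ) (deriv g z)).im := by
  have hf' : AnalyticOnNhd ℂ (deriv f) s := hf.deriv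
  have hg' : AnalyticOnNhd ℂ (deriv g) s := hg.deriv
  -- HasDerivAt facts at points of s
  have Hf : ∀ w ∈ s, HasDerivAt f (deriv f w) w := fun w hw =>
    ((hf w hw).differentiableAt).hasDerivAt
  have Hg : ∀ w ∈ s, HasDerivAt g (deriv g w) w := fun w hw =>
    ((hg w hw).differentiableAt).hasDerivAt
  have Hf' : HasDerivAt (deriv f) (deriv (deriv f) z) z :=
    ((hf' z hz).differentiableAt).hasDerivAt
  have Hg' : HasDerivAt (deriv g) (deriv (deriv g) z) z :=
    ((hg' z hz).differentiableAt).hasDerivAt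
  set a := deriv f z
  set b := deriv g z
  set a2 := deriv (deriv f) z
  set b2 := deriv (deriv g) z
  -- x part
  have e1 : (fun w => fderiv ℝ (fun w => (f w * (starRingEnd ℂ) (g w)).im) w 1)
      =ᶠ[nhds z] (fun w => (deriv f w * (starRingEnd ℂ) (g w)).im
        + (f w * (starRingEnd ℂ) (deriv g w)).im) := by
    filter_upwards [hs.mem_nhds hz] with w hw
    rw [fderiv_immulconj (Hf w hw) (Hg w hw)]
    simp [Complex.add_im]
  have e2 : (fun w => fderiv ℝ (fun w => (f w * (starRingEnd ℂ) (g w)).im) w Complex.I)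
      =ᶠ[nhds z] (fun w => ((deriv f w * Complex.I) * (starRingEnd ℂ) (g w)).im
        + (f w * (starRingEnd ℂ) (deriv g w * Complex.I)).im) := by
    filter_upwards [hs.mem_nhds hz] with w hw
    rw [fderiv_immulconj (Hf w hw) (Hg w hw)]
    simp [Complex.add_im]
  have hx : fderiv ℝ (fun w => fderiv ℝ (fun w => (f w * (starRingEnd ℂ) (g w)).im) w 1) z 1
      = (a2 * 1 * (starRingEnd ℂ) (g z) + deriv f z * (starRingEnd ℂ) (b * 1)).im
        + (a * 1 * (starRingEnd ℂ) b + f z * (starRingEnd ℂ) (b2 * 1)).im := by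
    rw [e1.fderiv_eq]
    have h1 := hasFDerivAt_immulconj Hf' (Hg z hz)
    have h2 := hasFDerivAt_immulconj (Hf z hz) Hg'
    rw [(h1.fun_add h2).fderiv]
    rw [ContinuousLinearMap.add_apply]
    rw [h1.fderiv.symm, h2.fderiv.symm]
    rw [fderiv_immulconj Hf' (Hg z hz), fderiv_immulconj (Hf z hz) Hg']
  have hy : fderiv ℝ (fun w => fderiv ℝ (fun w => (f w * (starRingEnd ℂ) (g w)).im) w Complex.I) z Complex.I
      = ((a2 * Complex.I) * Complex.I * (starRingEnd ℂ) (g z)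
          + (deriv f z * Complex.I) * (starRingEnd ℂ) (b * Complex.I)).im
        + (a * Complex.I * (starRingEnd ℂ) (b * Complex.I)
          + f z * (starRingEnd ℂ) ((b2 * Complex.I) * Complex.I)).im := by
    rw [e2.fderiv_eq]
    have h1 := hasFDerivAt_immulconj (Hf'.mul_const Complex.I) (Hg z hz)
    have h2 := hasFDerivAt_immulconj (Hf z hz) (Hg'.mul_const Complex.I)
    rw [(h1.fun_add h2).fderiv]
    rw [ContinuousLinearMap.add_apply]
    rw [h1.fderiv.symm, h2.fderiv.symm]
    rw [fderiv_immulconj (Hf'.mul_const Complex.I) (Hg z hz),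
      fderiv_immulconj (Hf z hz) (Hg'.mul_const Complex.I)]
  have key : (a2 * 1 * (starRingEnd ℂ) (g z) + deriv f z * (starRingEnd ℂ) (b * 1))
        + (a * 1 * (starRingEnd ℂ) b + f z * (starRingEnd ℂ) (b2 * 1))
        + (((a2 * Complex.I) * Complex.I * (starRingEnd ℂ) (g z)
          + (deriv f z * Complex.I) * (starRingEnd ℂ) (b * Complex.I))
        + (a * Complex.I * (starRingEnd ℂ) (b * Complex.I)
          + f z * (starRingEnd ℂ) ((b2 * Complex.I) * Complex.I)))
      = 4 * (a * (starRingEnd ℂ) b) := by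
    simp only [map_mul, Complex.conj_I, mul_one]
    ring_nf
    simp only [Complex.I_sq]
    ring
  unfold laplacian
  rw [hx, hy]
  have him : ∀ x y : ℂ, x.im + y.im = (x + y).im := fun x y => (Complex.add_im x y).symm
  rw [him, him, him, key]
  simp [Complex.mul_im]

/-- If `τ, h` are holomorphic on a nonempty connected open set `D`, with `Im τ > 0`,
`h ≠ 0`, `h'` not identically zero, and `Im(τ)/|h|²` harmonic, then `h = c(τ − r)`
for some `r ∈ ℝ` and `c ∈ ℂ \ {0}`. -/
theorem stmt_9 (D : Set ℂ) (hD : IsOpen D) (hconn : IsConnected D)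
    (τ h : ℂ → ℂ) (hτ : DifferentiableOn ℂ τ D) (hh : DifferentiableOn ℂ h D)
    (hτim : ∀ z ∈ D, 0 < (τ z).im) (hh0 : ∀ z ∈ D, h z ≠ 0)
    (hh' : ¬ ∀ z ∈ D, deriv h z = 0)
    (hharm : ∀ z ∈ D, laplacian (fun w => (τ w).im / ‖h w‖ ^ 2) z = 0) :
    ∃ (r : ℝ) (c : ℂ), c ≠ 0 ∧ ∀ z ∈ D, h z = c * (τ z - (r : ℂ)) := by
  set g : ℂ → ℂ := fun w => (h w)⁻¹ with hgdef
  set f : ℂ → ℂ := fun w => τ w * (h w)⁻¹ with hfdef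
  have hgdiff : DifferentiableOn ℂ g D := hh.inv hh0
  have hfdiff : DifferentiableOn ℂ f D := hτ.mul hgdiff
  have hfan : AnalyticOnNhd ℂ f D := hfdiff.analyticOnNhd hD
  have hgan : AnalyticOnNhd ℂ g D := hgdiff.analyticOnNhd hD
  have hhan : AnalyticOnNhd ℂ h D := hh.analyticOnNhd hD
  have hτan : AnalyticOnNhd ℂ τ D := hτ.analyticOnNhd hD
  have hueq : (fun w => (τ w).im / ‖h w‖ ^ 2)
      = (fun w => (f w * (starRingEnd ℂ) (g w)).im) := by
    funext w
    simp only [hfdef, hgdef]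
    rcases eq_or_ne (h w) 0 with h0 | h0
    · simp [h0]
    · have hnS : Complex.normSq (h w) ≠ 0 := (Complex.normSq_pos.mpr h0).ne'
      rw [mul_assoc, Complex.mul_conj, Complex.normSq_inv]
      have habs : (‖h w‖) ^ 2 = Complex.normSq (h w) := Complex.sq_norm _
      rw [div_eq_mul_inv, habs]
      simp only [Complex.mul_im, Complex.ofReal_im, Complex.ofReal_re, mul_zero, zero_add]
  have key0 : ∀ z ∈ D, (deriv f z * (starRingEnd ℂ) (deriv g z)).im = 0 := by
    intro z hz
    have := hharm z hz
    rw [hueq, laplacian_immulconj hD hfan hgan hz] at this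
    linarith
  -- derivative formulas
  have hdτ : ∀ z ∈ D, HasDerivAt τ (deriv τ z) z := fun z hz =>
    (hτ.differentiableAt (hD.mem_nhds hz)).hasDerivAt
  have hdh : ∀ z ∈ D, HasDerivAt h (deriv h z) z := fun z hz =>
    (hh.differentiableAt (hD.mem_nhds hz)).hasDerivAt
  have hdg : ∀ z ∈ D, HasDerivAt g (-(deriv h z) / h z ^ 2) z := fun z hz =>
    (hdh z hz).inv (hh0 z hz)
  have hdf : ∀ z ∈ D, HasDerivAt f
      (deriv τ z * (h z)⁻¹ + τ z * (-(deriv h z) / h z ^ 2)) z := fun z hz =>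
    (hdτ z hz).mul (hdg z hz)
  -- key1 : Im G = 0 where h' ≠ 0
  have key1 : ∀ z ∈ D, deriv h z ≠ 0 →
      (τ z - deriv τ z * h z / deriv h z).im = 0 := by
    intro z hz hz'
    have h0 := key0 z hz
    rw [(hdf z hz).deriv, (hdg z hz).deriv] at h0
    have hH : h z ≠ 0 := hh0 z hz
    have hcH : (starRingEnd ℂ) (h z) ≠ 0 := by simpa using hH
    have hcH' : (starRingEnd ℂ) (deriv h z) ≠ 0 := by simpa using hz'
    have hfact : (deriv τ z * (h z)⁻¹ + τ z * (-(deriv h z) / h z ^ 2))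
          * (starRingEnd ℂ) (-(deriv h z) / h z ^ 2)
        = (τ z - deriv τ z * h z / deriv h z)
          * (((Complex.normSq (deriv h z) / Complex.normSq (h z) ^ 2 : ℝ)) : ℂ) := by
      push_cast
      rw [← Complex.mul_conj, ← Complex.mul_conj]
      simp only [map_div₀, map_neg, map_pow]
      field_simp
      ring
    rw [hfact] at h0
    have ht : (Complex.normSq (deriv h z) / Complex.normSq (h z) ^ 2 : ℝ) ≠ 0 := by
      exact div_ne_zero (Complex.normSq_pos.mpr hz').ne'
        (pow_ne_zero _ (Complex.normSq_pos.mpr hH).ne')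
    rw [Complex.mul_im] at h0
    simp only [Complex.ofReal_im, Complex.ofReal_re, mul_zero, zero_add] at h0
    exact (mul_eq_zero.mp h0).resolve_right ht
  -- pick a point where deriv h ≠ 0
  push_neg at hh'
  obtain ⟨z₀, hz₀D, hz₀'⟩ := hh'
  -- open set where h' ≠ 0
  set U : Set ℂ := D ∩ (deriv h) ⁻¹' {0}ᶜ with hUdef
  have hUsub : U ⊆ D := Set.inter_subset_left
  have hUopen : IsOpen U := by
    rw [isOpen_iff_mem_nhds]
    rintro z ⟨hzD, hz'⟩
    have hcont : ContinuousAt (deriv h) z :=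
      ((hhan.deriv z hzD).differentiableAt).continuousAt
    exact Filter.inter_mem (hD.mem_nhds hzD)
      (hcont.preimage_mem_nhds (compl_singleton_mem_nhds hz'))
  have hz₀U : z₀ ∈ U := ⟨hz₀D, hz₀'⟩
  obtain ⟨ε, hε, hball⟩ := Metric.isOpen_iff.mp hUopen z₀ hz₀U
  -- G and its properties
  set G : ℂ → ℂ := fun z => τ z - deriv τ z * h z / deriv h z with hGdef
  have hGdiff : DifferentiableOn ℂ G U :=
    (hτ.mono hUsub).sub
      (((hτan.deriv.differentiableOn.mono hUsub).mul (hh.mono hUsub)).div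
        (hhan.deriv.differentiableOn.mono hUsub) (fun z hz => hz.2))
  have hGim : ∀ z ∈ U, (G z).im = 0 := fun z hz => key1 z hz.1 hz.2
  have hG0 : ∀ z ∈ Metric.ball z₀ ε, deriv G z = 0 := by
    intro z hz
    have hzU := hball hz
    have hd : HasDerivAt G (deriv G z) z :=
      (hGdiff.differentiableAt (hUopen.mem_nhds hzU)).hasDerivAt
    have hF : HasFDerivAt (fun w => (G w).im)
        (Complex.imCLM.comp
          ((ContinuousLinearMap.smulRight (1 : ℂ →L[ℂ] ℂ) (deriv G z)).restrictScalars ℝ)) z :=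
      Complex.imCLM.hasFDerivAt.comp z (hd.hasFDerivAt.restrictScalars ℝ)
    have hev : (fun w => (G w).im) =ᶠ[nhds z] (fun _ => (0 : ℝ)) := by
      filter_upwards [hUopen.mem_nhds hzU] with w hw using hGim w hw
    have hfd0 : fderiv ℝ (fun w => (G w).im) z = 0 := by
      rw [hev.fderiv_eq]; exact fderiv_const_apply 0
    rw [hF.fderiv] at hfd0
    have him1 : (deriv G z).im = 0 := by
      have := congrFun (congrArg DFunLike.coe hfd0) 1
      simpa using this
    have him2 : (deriv G z).re = 0 := by
      have := congrFun (congrArg DFunLike.coe hfd0) Complex.I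
      simpa [Complex.mul_im] using this
    exact Complex.ext him2 him1
  -- G is constant on the ball
  have hGconst : ∀ z ∈ Metric.ball z₀ ε, G z = G z₀ := by
    intro z hz
    refine (convex_ball z₀ ε).is_const_of_fderivWithin_eq_zero
      (hGdiff.mono hball) (fun x hx => ?_) hz (Metric.mem_ball_self hε)
    rw [fderivWithin_of_isOpen Metric.isOpen_ball hx]
    have : HasDerivAt G 0 x := by
      have := (hGdiff.differentiableAt (hUopen.mem_nhds (hball hx))).hasDerivAt
      rwa [hG0 x hx] at this
    rw [this.hasFDerivAt.fderiv]
    ext v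
    simp
  set ρ : ℝ := (G z₀).re with hρdef
  have hGz₀ : G z₀ = (ρ : ℂ) := Complex.ext rfl (by simp [hGim z₀ hz₀U])
  -- on the ball : τ' h = (τ - ρ) h'
  have hQball : ∀ z ∈ Metric.ball z₀ ε,
      deriv τ z * h z = (τ z - (ρ : ℂ)) * deriv h z := by
    intro z hz
    have h1 : G z = (ρ : ℂ) := (hGconst z hz).trans hGz₀
    have hz' : deriv h z ≠ 0 := (hball hz).2
    rw [hGdef] at h1
    field_simp at h1
    linear_combination -h1
  -- τ z - ρ never vanishes on D
  have hτρ : ∀ z ∈ D, τ z - (ρ : ℂ) ≠ 0 := by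
    intro z hz hc
    have := hτim z hz
    have : (τ z - (ρ : ℂ)).im = 0 := by rw [hc]; rfl
    simp at this
    linarith [hτim z hz]
  -- the quotient k = h/(τ-ρ) is constant on the ball
  set c : ℂ := h z₀ * (τ z₀ - (ρ : ℂ))⁻¹ with hcdef
  set k : ℂ → ℂ := fun z => h z * (τ z - (ρ : ℂ))⁻¹ with hkdef
  have hkd : ∀ z ∈ Metric.ball z₀ ε, HasDerivAt k 0 z := by
    intro z hz
    have hzD : z ∈ D := hUsub (hball hz)
    have h1 : HasDerivAt (fun w => τ w - (ρ : ℂ)) (deriv τ z) z := (hdτ z hzD).sub_const _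
    have h2 : HasDerivAt (fun w => (τ w - (ρ : ℂ))⁻¹)
        (-(deriv τ z) / (τ z - (ρ : ℂ)) ^ 2) z := h1.inv (hτρ z hzD)
    have h3 := (hdh z hzD).mul h2
    have : deriv h z * (τ z - (ρ : ℂ))⁻¹
        + h z * (-(deriv τ z) / (τ z - (ρ : ℂ)) ^ 2) = 0 := by
      have hq := hQball z hz
      have hne := hτρ z hzD
      field_simp
      linear_combination -hq
    rwa [this] at h3
  have hkconst : ∀ z ∈ Metric.ball z₀ ε, k z = c := by
    intro z hz
    refine (convex_ball z₀ ε).is_const_of_fderivWithin_eq_zero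
      (fun x hx => ((hkd x hx).differentiableAt).differentiableWithinAt)
      (fun x hx => ?_) hz (Metric.mem_ball_self hε)
    rw [fderivWithin_of_isOpen Metric.isOpen_ball hx, (hkd x hx).hasFDerivAt.fderiv]
    ext v
    simp
  -- identity theorem
  set Q : ℂ → ℂ := fun z => h z - c * (τ z - (ρ : ℂ)) with hQdef
  have hQan : AnalyticOnNhd ℂ Q D :=
    hhan.sub ((analyticOnNhd_const).mul (hτan.sub analyticOnNhd_const))
  have hQev : Q =ᶠ[nhds z₀] 0 := by
    filter_upwards [Metric.ball_mem_nhds z₀ hε] with w hw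
    have hk := hkconst w hw
    have hwD : w ∈ D := hUsub (hball hw)
    have hne := hτρ w hwD
    simp only [hQdef, Pi.zero_apply]
    rw [hkdef] at hk
    field_simp at hk
    linear_combination hk
  have hQ0 : Set.EqOn Q 0 D :=
    hQan.eqOn_zero_of_preconnected_of_eventuallyEq_zero hconn.isPreconnected hz₀D hQev
  refine ⟨ρ, c, ?_, ?_⟩
  · simp only [hcdef]
    exact mul_ne_zero (hh0 z₀ hz₀D) (inv_ne_zero (hτρ z₀ hz₀D))
  · intro z hz
    have := hQ0 hz
    simp only [hQdef, Pi.zero_apply] at this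
    linear_combination this
end

section
/- Let D ⊆ ℂ be a nonempty connected open set. For j = 1, 2, let f_j, g_j : D → ℂ be holomorphic functions with f_j nowhere vanishing and Im(g_j(z)/f_j(z)) > 0 for all z ∈ D. Suppose the two induced metrics agree, i.e., Im(g₁(z)/f₁(z))·|f₁(z)|² = Im(g₂(z)/f₂(z))·|f₂(z)|² for all z ∈ D. Then there exist θ ∈ ℝ and a matrix [[a, b], [c, d]] ∈ SL₂(ℝ) such that f₂ = e^{iθ}·(a·f₁ + c·g₁) and g₂ = e^{iθ}·(b·f₁ + d·g₁) on D. (This is the coordinate form of the statement that two special Kähler structures on a Riemann surface are isometric if and only if they are related by a twist.) -/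
open Complex Filter Topology

noncomputable section SKaux

def Hh (u v : ℂ × ℂ) : ℂ := u.2 * (starRingEnd ℂ) v.1 - (starRingEnd ℂ) v.2 * u.1

lemma Hh_smul_left (x y : ℂ) (u v w : ℂ × ℂ) :
    Hh (x • u + y • v) w = x * Hh u w + y * Hh v w := by
  simp only [Hh, Prod.smul_fst, Prod.smul_snd, Prod.fst_add, Prod.snd_add, smul_eq_mul]
  ring

lemma Hh_sub_left (u v w : ℂ × ℂ) : Hh (u - v) w = Hh u w - Hh v w := by
  simp only [Hh, Prod.fst_sub, Prod.snd_sub]; ring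

lemma Hh_expand2 (x y x' y' : ℂ) (u v u' v' : ℂ × ℂ) :
    Hh (x • u + y • v) (x' • u' + y' • v')
      = x * (starRingEnd ℂ) x' * Hh u u' + x * (starRingEnd ℂ) y' * Hh u v'
        + y * (starRingEnd ℂ) x' * Hh v u' + y * (starRingEnd ℂ) y' * Hh v v' := by
  simp only [Hh, Prod.smul_fst, Prod.smul_snd, Prod.fst_add, Prod.snd_add, smul_eq_mul,
    map_add, map_mul]
  ring

lemma Hh_det (u v : ℂ × ℂ) :
    Hh u v * Hh v u - Hh u u * Hh v v
      = -((u.1 * v.2 - u.2 * v.1) * (starRingEnd ℂ) (u.1 * v.2 - u.2 * v.1)) := by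
  simp only [Hh, map_sub, map_mul]; ring

lemma Hh_eq_zero (c b₀ b₁ : ℂ × ℂ) (hdet : b₀.1 * b₁.2 - b₀.2 * b₁.1 ≠ 0)
    (h0 : Hh c b₀ = 0) (h1 : Hh c b₁ = 0) : c = 0 := by
  have hdet' : (starRingEnd ℂ) (b₀.1 * b₁.2 - b₀.2 * b₁.1) ≠ 0 := fun h => hdet (by
    have := congrArg (starRingEnd ℂ) h
    simpa using this)
  simp only [Hh] at h0 h1
  have hc1 : c.1 * (starRingEnd ℂ) (b₀.1 * b₁.2 - b₀.2 * b₁.1) = 0 := by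
    simp only [map_sub, map_mul]
    linear_combination (starRingEnd ℂ) b₁.1 * h0 - (starRingEnd ℂ) b₀.1 * h1
  have hc2 : c.2 * (starRingEnd ℂ) (b₀.1 * b₁.2 - b₀.2 * b₁.1) = 0 := by
    simp only [map_sub, map_mul]
    linear_combination (starRingEnd ℂ) b₁.2 * h0 - (starRingEnd ℂ) b₀.2 * h1
  have e1 : c.1 = 0 := by
    rcases mul_eq_zero.1 hc1 with h | h
    · exact h
    · exact absurd h hdet'
  have e2 : c.2 = 0 := by
    rcases mul_eq_zero.1 hc2 with h | h
    · exact h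
    · exact absurd h hdet'
  exact Prod.ext e1 e2

lemma Hh_eq_zero_sig (c b : ℂ × ℂ) (hb1 : b.1 ≠ 0) (hbpos : (b.2 * (starRingEnd ℂ) b.1).im ≠ 0)
    (h0 : Hh c b = 0) (hc : Hh c c = 0) : c = 0 := by
  simp only [Hh, sub_eq_zero] at h0 hc
  have h0' : (starRingEnd ℂ) c.2 * b.1 = b.2 * (starRingEnd ℂ) c.1 := by
    have := congrArg (starRingEnd ℂ) h0
    simpa [map_mul] using this
  have key : (c.1 * (starRingEnd ℂ) c.1) *
      ((starRingEnd ℂ) (b.2 * (starRingEnd ℂ) b.1) - b.2 * (starRingEnd ℂ) b.1) = 0 := by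
    simp only [map_mul, RingHomCompTriple.comp_apply, RingHom.id_apply, Complex.conj_conj]
    linear_combination (-(starRingEnd ℂ) c.1 * b.1) * h0
      + (c.1 * (starRingEnd ℂ) b.1) * h0' + (b.1 * (starRingEnd ℂ) b.1) * hc
  have hfac : (starRingEnd ℂ) (b.2 * (starRingEnd ℂ) b.1) - b.2 * (starRingEnd ℂ) b.1 ≠ 0 := by
    intro h
    have h2 : b.2 * (starRingEnd ℂ) b.1 - (starRingEnd ℂ) (b.2 * (starRingEnd ℂ) b.1) = 0 := by
      linear_combination -h
    rw [Complex.sub_conj] at h2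
    simp only [mul_eq_zero, Complex.I_ne_zero, or_false, Complex.ofReal_eq_zero] at h2
    rcases h2 with h2 | h2
    · norm_num at h2
    · exact hbpos h2
  have e1 : c.1 = 0 := by
    rcases mul_eq_zero.1 key with h | h
    · rw [Complex.mul_conj] at h
      exact Complex.normSq_eq_zero.1 (by exact_mod_cast h)
    · exact absurd h hfac
  have e2 : c.2 = 0 := by
    have h3 : c.2 * (starRingEnd ℂ) b.1 = 0 := by rw [h0, e1, mul_zero]
    rcases mul_eq_zero.1 h3 with h | h
    · exact h
    · exact absurd h (fun hh => hb1 (by simpa using congrArg (starRingEnd ℂ) hh))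
  exact Prod.ext e1 e2

/-- Endgame, nondegenerate case. -/
lemma endgame1 (a b : ℕ → ℂ × ℂ)
    (hGram : ∀ m n, Hh (a m) (a n) = Hh (b m) (b n))
    (hdA : (a 0).1 * (a 1).2 - (a 0).2 * (a 1).1 ≠ 0) :
    ∃ P Q R S : ℂ,
      (R * (starRingEnd ℂ) P = (starRingEnd ℂ) R * P) ∧
      (S * (starRingEnd ℂ) Q = (starRingEnd ℂ) S * Q) ∧
      (R * (starRingEnd ℂ) Q - (starRingEnd ℂ) S * P = -1) ∧
      ∀ m, (b m).1 = P * (a m).1 + Q * (a m).2 ∧ (b m).2 = R * (a m).1 + S * (a m).2 := by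
  have hdB : (b 0).1 * (b 1).2 - (b 0).2 * (b 1).1 ≠ 0 := by
    intro h
    have hDet := Hh_det (a 0) (a 1)
    rw [hGram 0 1, hGram 1 0, hGram 0 0, hGram 1 1, Hh_det (b 0) (b 1), h] at hDet
    have h2 : ((a 0).1 * (a 1).2 - (a 0).2 * (a 1).1)
        * (starRingEnd ℂ) ((a 0).1 * (a 1).2 - (a 0).2 * (a 1).1) = 0 := by
      linear_combination hDet
    rcases mul_eq_zero.1 h2 with h3 | h3
    · exact hdA h3
    · exact hdA (by simpa using congrArg (starRingEnd ℂ) h3)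
  set DA : ℂ := (a 0).1 * (a 1).2 - (a 0).2 * (a 1).1 with hDAdef
  set NB1 : ℂ × ℂ := ((a 1).2 / DA) • b 0 + (-(a 0).2 / DA) • b 1 with hNB1
  set NB2 : ℂ × ℂ := (-(a 1).1 / DA) • b 0 + ((a 0).1 / DA) • b 1 with hNB2
  have e1exp : (((1:ℂ), (0:ℂ)) : ℂ × ℂ)
      = ((a 1).2 / DA) • a 0 + (-(a 0).2 / DA) • a 1 := by
    rw [Prod.ext_iff]
    constructor
    · simp only [Prod.fst_add, Prod.smul_fst, smul_eq_mul]
      field_simp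
      linear_combination hDAdef
    · simp only [Prod.snd_add, Prod.smul_snd, smul_eq_mul]
      field_simp
      ring
  have e2exp : (((0:ℂ), (1:ℂ)) : ℂ × ℂ)
      = (-(a 1).1 / DA) • a 0 + ((a 0).1 / DA) • a 1 := by
    rw [Prod.ext_iff]
    constructor
    · simp only [Prod.fst_add, Prod.smul_fst, smul_eq_mul]
      field_simp
      ring
    · simp only [Prod.snd_add, Prod.smul_snd, smul_eq_mul]
      field_simp
      ring
  have hXY : ∀ x y x' y' : ℂ, Hh (x • a 0 + y • a 1) (x' • a 0 + y' • a 1)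
      = Hh (x • b 0 + y • b 1) (x' • b 0 + y' • b 1) := by
    intro x y x' y'
    rw [Hh_expand2, Hh_expand2, hGram 0 0, hGram 0 1, hGram 1 0, hGram 1 1]
  have hsplitv : ∀ u : ℂ × ℂ, u = u.1 • (((1:ℂ), (0:ℂ)) : ℂ × ℂ)
      + u.2 • (((0:ℂ), (1:ℂ)) : ℂ × ℂ) := by
    intro u
    rw [Prod.ext_iff]
    constructor <;> simp
  have q1 : Hh NB1 (b 0) = Hh (((1:ℂ), (0:ℂ)) : ℂ × ℂ) (a 0) := by
    have h := hXY ((a 1).2 / DA) (-(a 0).2 / DA) 1 0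
    simp only [one_smul, zero_smul, add_zero] at h
    rw [← e1exp, ← hNB1] at h
    exact h.symm
  have q2 : Hh NB2 (b 0) = Hh (((0:ℂ), (1:ℂ)) : ℂ × ℂ) (a 0) := by
    have h := hXY (-(a 1).1 / DA) ((a 0).1 / DA) 1 0
    simp only [one_smul, zero_smul, add_zero] at h
    rw [← e2exp, ← hNB2] at h
    exact h.symm
  have q1' : Hh NB1 (b 1) = Hh (((1:ℂ), (0:ℂ)) : ℂ × ℂ) (a 1) := by
    have h := hXY ((a 1).2 / DA) (-(a 0).2 / DA) 0 1
    simp only [one_smul, zero_smul, zero_add] at h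
    rw [← e1exp, ← hNB1] at h
    exact h.symm
  have q2' : Hh NB2 (b 1) = Hh (((0:ℂ), (1:ℂ)) : ℂ × ℂ) (a 1) := by
    have h := hXY (-(a 1).1 / DA) ((a 0).1 / DA) 0 1
    simp only [one_smul, zero_smul, zero_add] at h
    rw [← e2exp, ← hNB2] at h
    exact h.symm
  have hNm : ∀ m, b m = (a m).1 • NB1 + (a m).2 • NB2 := by
    intro m
    have h0 : Hh (b m - ((a m).1 • NB1 + (a m).2 • NB2)) (b 0) = 0 := by
      rw [Hh_sub_left, Hh_smul_left, q1, q2, ← hGram m 0]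
      nth_rewrite 1 [hsplitv (a m)]
      rw [Hh_smul_left]
      ring
    have h1 : Hh (b m - ((a m).1 • NB1 + (a m).2 • NB2)) (b 1) = 0 := by
      rw [Hh_sub_left, Hh_smul_left, q1', q2', ← hGram m 1]
      nth_rewrite 1 [hsplitv (a m)]
      rw [Hh_smul_left]
      ring
    have := Hh_eq_zero _ (b 0) (b 1) hdB h0 h1
    exact sub_eq_zero.1 this
  have cond1 : Hh NB1 NB1 = 0 := by
    have h := hXY ((a 1).2 / DA) (-(a 0).2 / DA) ((a 1).2 / DA) (-(a 0).2 / DA)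
    rw [← e1exp, ← hNB1] at h
    rw [← h]
    simp [Hh]
  have cond2 : Hh NB2 NB2 = 0 := by
    have h := hXY (-(a 1).1 / DA) ((a 0).1 / DA) (-(a 1).1 / DA) ((a 0).1 / DA)
    rw [← e2exp, ← hNB2] at h
    rw [← h]
    simp [Hh]
  have cond3 : Hh NB1 NB2 = -1 := by
    have h := hXY ((a 1).2 / DA) (-(a 0).2 / DA) (-(a 1).1 / DA) ((a 0).1 / DA)
    rw [← e1exp, ← e2exp, ← hNB1, ← hNB2] at h
    rw [← h]
    simp [Hh]
  refine ⟨NB1.1, NB2.1, NB1.2, NB2.2, ?_, ?_, ?_, ?_⟩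
  · simp only [Hh] at cond1; linear_combination cond1
  · simp only [Hh] at cond2; linear_combination cond2
  · simp only [Hh] at cond3; linear_combination cond3
  · intro m
    constructor
    · have := congrArg Prod.fst (hNm m)
      simp only [Prod.fst_add, Prod.smul_fst, smul_eq_mul] at this
      linear_combination this
    · have := congrArg Prod.snd (hNm m)
      simp only [Prod.snd_add, Prod.smul_snd, smul_eq_mul] at this
      linear_combination this

/-- Endgame, degenerate (constant `τ`) case. -/
lemma endgame2 (a b : ℕ → ℂ × ℂ)
    (hGram : ∀ m n, Hh (a m) (a n) = Hh (b m) (b n))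
    (hb1 : (b 0).1 ≠ 0) (hbpos : ((b 0).2 * (starRingEnd ℂ) ((b 0).1)).im ≠ 0)
    (hp : (a 0).1 ≠ 0)
    (hlin : ∀ m, (a m).2 * (a 0).1 = (a m).1 * (a 0).2) :
    ∀ m, (b m).1 * (a 0).1 = (a m).1 * (b 0).1 ∧ (b m).2 * (a 0).1 = (a m).1 * (b 0).2 := by
  intro m
  set lam : ℂ := (a m).1 / (a 0).1 with hlam
  have ha : a m = lam • a 0 := by
    rw [Prod.ext_iff]
    constructor
    · simp only [Prod.smul_fst, smul_eq_mul, hlam]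
      field_simp
    · simp only [Prod.smul_snd, smul_eq_mul, hlam]
      rw [div_mul_eq_mul_div, eq_div_iff hp]
      linear_combination hlin m
  have hHsmul : ∀ (x : ℂ) (u w : ℂ × ℂ), Hh (x • u) w = x * Hh u w := by
    intro x u w
    simp only [Hh, Prod.smul_fst, Prod.smul_snd, smul_eq_mul]; ring
  have hHsmul' : ∀ (x : ℂ) (u w : ℂ × ℂ), Hh w (x • u) = (starRingEnd ℂ) x * Hh w u := by
    intro x u w
    simp only [Hh, Prod.smul_fst, Prod.smul_snd, smul_eq_mul, map_mul]; ring
  have hHsub : ∀ u v w : ℂ × ℂ, Hh (u - v) w = Hh u w - Hh v w := Hh_sub_left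
  have hHsubr : ∀ w u v : ℂ × ℂ, Hh w (u - v) = Hh w u - Hh w v := by
    intro w u v
    simp only [Hh, Prod.fst_sub, Prod.snd_sub, map_sub]; ring
  have hm0 : Hh (a m) (a 0) = lam * Hh (a 0) (a 0) := by
    nth_rewrite 1 [ha]
    rw [hHsmul]
  have h0m : Hh (a 0) (a m) = (starRingEnd ℂ) lam * Hh (a 0) (a 0) := by
    rw [ha, hHsmul']
  have hmm : Hh (a m) (a m) = lam * ((starRingEnd ℂ) lam * Hh (a 0) (a 0)) := by
    rw [ha, hHsmul, hHsmul']
  have h0 : Hh (b m - lam • b 0) (b 0) = 0 := by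
    rw [hHsub, hHsmul, ← hGram m 0, ← hGram 0 0, hm0]
    ring
  have hcc : Hh (b m - lam • b 0) (b m - lam • b 0) = 0 := by
    rw [hHsub, hHsubr, hHsubr, hHsmul, hHsmul, hHsmul', hHsmul',
      ← hGram m m, ← hGram m 0, ← hGram 0 m, ← hGram 0 0, hmm, hm0, h0m]
    ring
  have hc0 := Hh_eq_zero_sig _ (b 0) hb1 hbpos h0 hcc
  have hc0' : b m = lam • b 0 := sub_eq_zero.1 hc0
  constructor
  · have := congrArg Prod.fst hc0'
    simp only [Prod.smul_fst, smul_eq_mul, hlam] at this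
    rw [this]
    field_simp
  · have := congrArg Prod.snd hc0'
    simp only [Prod.smul_snd, smul_eq_mul, hlam] at this
    rw [this]
    field_simp

/-- A `Hh`-unitary matrix is a twist of a real `SL₂` matrix. -/
lemma unitary_decomp (P Q R S : ℂ)
    (h1 : R * (starRingEnd ℂ) P = (starRingEnd ℂ) R * P)
    (h2 : S * (starRingEnd ℂ) Q = (starRingEnd ℂ) S * Q)
    (h3 : R * (starRingEnd ℂ) Q - (starRingEnd ℂ) S * P = -1) :
    ∃ θ a b c d : ℝ, a * d - b * c = 1 ∧
      P = Complex.exp (θ * Complex.I) * a ∧ R = Complex.exp (θ * Complex.I) * b ∧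
      Q = Complex.exp (θ * Complex.I) * c ∧ S = Complex.exp (θ * Complex.I) * d := by
  set δ : ℂ := P * S - Q * R with hδ
  have h3c : (starRingEnd ℂ) R * Q - S * (starRingEnd ℂ) P = -1 := by
    have := congrArg (starRingEnd ℂ) h3
    simpa [map_sub, map_mul] using this
  have hRQ : R * (starRingEnd ℂ) Q = (starRingEnd ℂ) R * Q := by
    linear_combination (S * (starRingEnd ℂ) Q) * h1 + ((starRingEnd ℂ) R * P) * h2
      + (R * (starRingEnd ℂ) Q) * h3c - ((starRingEnd ℂ) R * Q) * h3
  have eP : (starRingEnd ℂ) δ * P = (starRingEnd ℂ) P := by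
    simp only [hδ, map_sub, map_mul]
    linear_combination (-(starRingEnd ℂ) P) * h3 + (starRingEnd ℂ) Q * h1
  have eQ : (starRingEnd ℂ) δ * Q = (starRingEnd ℂ) Q := by
    simp only [hδ, map_sub, map_mul]
    linear_combination (-(starRingEnd ℂ) P) * h2 - (starRingEnd ℂ) Q * h3c
  have eR : (starRingEnd ℂ) δ * R = (starRingEnd ℂ) R := by
    simp only [hδ, map_sub, map_mul]
    linear_combination (starRingEnd ℂ) S * h1 - (starRingEnd ℂ) R * h3
  have eS : (starRingEnd ℂ) δ * S = (starRingEnd ℂ) S := by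
    simp only [hδ, map_sub, map_mul]
    linear_combination (-(starRingEnd ℂ) S) * h3c - (starRingEnd ℂ) R * h2
  have hunit : δ * (starRingEnd ℂ) δ = 1 := by
    calc δ * (starRingEnd ℂ) δ = ((starRingEnd ℂ) δ * S) * P - ((starRingEnd ℂ) δ * R) * Q := by
          rw [hδ]; ring
    _ = (starRingEnd ℂ) S * P - (starRingEnd ℂ) R * Q := by rw [eS, eR]
    _ = 1 := by linear_combination -h3 + hRQ
  have hδne : δ ≠ 0 := left_ne_zero_of_mul_eq_one hunit
  have habs : ‖δ‖ = 1 := by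
    have h4 : Complex.normSq δ = 1 := by
      have h5 := hunit
      rw [Complex.mul_conj] at h5
      exact_mod_cast h5
    have := Complex.sq_norm δ
    nlinarith [norm_nonneg δ]
  refine ⟨δ.arg / 2, ?_⟩
  have hexp2 : Complex.exp ((δ.arg / 2 : ℝ) * Complex.I) *
      Complex.exp ((δ.arg / 2 : ℝ) * Complex.I) = δ := by
    rw [← Complex.exp_add]
    have h6 : ((δ.arg / 2 : ℝ) : ℂ) * Complex.I + ((δ.arg / 2 : ℝ) : ℂ) * Complex.I
        = (δ.arg : ℂ) * Complex.I := by
      push_cast; ring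
    rw [h6]
    have := Complex.norm_mul_exp_arg_mul_I δ
    rwa [habs, Complex.ofReal_one, one_mul] at this
  set E : ℂ := Complex.exp ((δ.arg / 2 : ℝ) * Complex.I) with hE
  have hEne : E ≠ 0 := Complex.exp_ne_zero _
  have hEconj : (starRingEnd ℂ) E = E⁻¹ := by
    rw [hE, ← Complex.exp_conj, ← Complex.exp_neg]
    congr 1
    rw [map_mul, Complex.conj_ofReal, Complex.conj_I]
    ring
  have hδconj : (starRingEnd ℂ) δ = δ⁻¹ :=
    eq_inv_of_mul_eq_one_left (by rw [mul_comm] at hunit; exact hunit)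
  have main : ∀ X : ℂ, (starRingEnd ℂ) δ * X = (starRingEnd ℂ) X →
      X = E * ((E⁻¹ * X).re : ℝ) := by
    intro X hX
    have hreal : (starRingEnd ℂ) (E⁻¹ * X) = E⁻¹ * X := by
      rw [map_mul, map_inv₀, hEconj, inv_inv]
      have h7 : E * (starRingEnd ℂ) X = E * ((starRingEnd ℂ) δ * X) := by rw [hX]
      rw [h7, hδconj, ← hexp2]
      field_simp
    have h8 := Complex.conj_eq_iff_re.1 hreal
    rw [h8]
    field_simp
  refine ⟨(E⁻¹ * P).re, (E⁻¹ * R).re, (E⁻¹ * Q).re, (E⁻¹ * S).re, ?_, main P eP, main R eR,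
    main Q eQ, main S eS⟩
  have hPE := main P eP
  have hQE := main Q eQ
  have hRE := main R eR
  have hSE := main S eS
  have key : δ * ((((E⁻¹ * P).re * (E⁻¹ * S).re - (E⁻¹ * R).re * (E⁻¹ * Q).re : ℝ)) : ℂ)
      = δ * 1 := by
    rw [mul_one]
    calc δ * ((((E⁻¹ * P).re * (E⁻¹ * S).re - (E⁻¹ * R).re * (E⁻¹ * Q).re : ℝ)) : ℂ)
        = (E * E) * ((((E⁻¹ * P).re * (E⁻¹ * S).re - (E⁻¹ * R).re * (E⁻¹ * Q).re : ℝ)) : ℂ) := by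
          rw [hexp2]
    _ = (E * ((E⁻¹ * P).re : ℝ)) * (E * ((E⁻¹ * S).re : ℝ))
          - (E * ((E⁻¹ * R).re : ℝ)) * (E * ((E⁻¹ * Q).re : ℝ)) := by push_cast; ring
    _ = P * S - R * Q := by rw [← hPE, ← hQE, ← hRE, ← hSE]
    _ = δ := by rw [hδ]; ring
  have := mul_left_cancel₀ hδne key
  exact_mod_cast this

/-- Derivative of `t ↦ u (z + t v)` along a real line. -/
lemma line_hasDerivAt {u : ℂ → ℂ} {u' z : ℂ} (hu : HasDerivAt u u' z) (v : ℂ) :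
    HasDerivAt (fun t : ℝ => u (z + ↑t * v)) (u' * v) 0 := by
  have haff : HasDerivAt (fun w : ℂ => z + w * v) v 0 := by
    simpa using ((hasDerivAt_id (0 : ℂ)).mul_const v).const_add z
  have hu0 : HasDerivAt u u' ((fun w : ℂ => z + w * v) 0) := by simpa using hu
  have hcomp : HasDerivAt (fun w : ℂ => u (z + w * v)) (u' * v) 0 := hu0.comp 0 haff
  have hcomp' : HasDerivAt (fun w : ℂ => u (z + w * v)) (u' * v) ((0 : ℝ) : ℂ) := by
    simpa using hcomp
  exact hcomp'.comp_ofReal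

/-- Key step: extracting the `∂z` and `∂z̄` parts of a vanishing mixed identity. -/
lemma step_deriv {D : Set ℂ} (hD : IsOpen D) {z : ℂ} (hz : z ∈ D)
    {u₁ u₂ u₃ u₄ w₁ w₂ w₃ w₄ : ℂ → ℂ} {u₁' u₂' u₃' u₄' w₁' w₂' w₃' w₄' : ℂ}
    (hu₁ : HasDerivAt u₁ u₁' z) (hu₂ : HasDerivAt u₂ u₂' z)
    (hu₃ : HasDerivAt u₃ u₃' z) (hu₄ : HasDerivAt u₄ u₄' z)
    (hw₁ : HasDerivAt w₁ w₁' z) (hw₂ : HasDerivAt w₂ w₂' z)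
    (hw₃ : HasDerivAt w₃ w₃' z) (hw₄ : HasDerivAt w₄ w₄' z)
    (hyp : ∀ y ∈ D, u₁ y * (starRingEnd ℂ) (w₁ y) - (starRingEnd ℂ) (w₂ y) * u₂ y
      - u₃ y * (starRingEnd ℂ) (w₃ y) + (starRingEnd ℂ) (w₄ y) * u₄ y = 0) :
    (u₁' * (starRingEnd ℂ) (w₁ z) - (starRingEnd ℂ) (w₂ z) * u₂'
      - u₃' * (starRingEnd ℂ) (w₃ z) + (starRingEnd ℂ) (w₄ z) * u₄' = 0) ∧
    (u₁ z * (starRingEnd ℂ) w₁' - (starRingEnd ℂ) w₂' * u₂ z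
      - u₃ z * (starRingEnd ℂ) w₃' + (starRingEnd ℂ) w₄' * u₄ z = 0) := by
  have line : ∀ v : ℂ,
      (u₁' * v) * (starRingEnd ℂ) (w₁ z) + u₁ z * (starRingEnd ℂ) (w₁' * v)
      - ((starRingEnd ℂ) (w₂' * v) * u₂ z + (starRingEnd ℂ) (w₂ z) * (u₂' * v))
      - ((u₃' * v) * (starRingEnd ℂ) (w₃ z) + u₃ z * (starRingEnd ℂ) (w₃' * v))
      + ((starRingEnd ℂ) (w₄' * v) * u₄ z + (starRingEnd ℂ) (w₄ z) * (u₄' * v)) = 0 := by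
    intro v
    have conj_line : ∀ (w : ℂ → ℂ) (w' : ℂ), HasDerivAt w w' z →
        HasDerivAt (fun t : ℝ => (starRingEnd ℂ) (w (z + ↑t * v)))
          ((starRingEnd ℂ) (w' * v)) 0 := by
      intro w w' hw
      exact (line_hasDerivAt hw v).star
    have hsum : HasDerivAt (fun t : ℝ =>
        u₁ (z + ↑t * v) * (starRingEnd ℂ) (w₁ (z + ↑t * v))
        - (starRingEnd ℂ) (w₂ (z + ↑t * v)) * u₂ (z + ↑t * v)
        - u₃ (z + ↑t * v) * (starRingEnd ℂ) (w₃ (z + ↑t * v))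
        + (starRingEnd ℂ) (w₄ (z + ↑t * v)) * u₄ (z + ↑t * v))
        ((u₁' * v) * (starRingEnd ℂ) (w₁ z) + u₁ z * (starRingEnd ℂ) (w₁' * v)
        - ((starRingEnd ℂ) (w₂' * v) * u₂ z + (starRingEnd ℂ) (w₂ z) * (u₂' * v))
        - ((u₃' * v) * (starRingEnd ℂ) (w₃ z) + u₃ z * (starRingEnd ℂ) (w₃' * v))
        + ((starRingEnd ℂ) (w₄' * v) * u₄ z + (starRingEnd ℂ) (w₄ z) * (u₄' * v))) 0 := by
      have t₁ := (line_hasDerivAt hu₁ v).mul (conj_line w₁ w₁' hw₁)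
      have t₂ := (conj_line w₂ w₂' hw₂).mul (line_hasDerivAt hu₂ v)
      have t₃ := (line_hasDerivAt hu₃ v).mul (conj_line w₃ w₃' hw₃)
      have t₄ := (conj_line w₄ w₄' hw₄).mul (line_hasDerivAt hu₄ v)
      have := ((t₁.sub t₂).sub t₃).add t₄
      simpa [Pi.mul_def, Pi.sub_def, Pi.add_def] using this
    have hmem : ∀ᶠ t : ℝ in 𝓝 0, z + ↑t * v ∈ D := by
      have hcont : Continuous (fun t : ℝ => z + ↑t * v) := by continuity
      have := hcont.continuousAt (x := 0)
      apply this.preimage_mem_nhds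
      simpa using hD.mem_nhds hz
    have hF0 : (fun t : ℝ =>
        u₁ (z + ↑t * v) * (starRingEnd ℂ) (w₁ (z + ↑t * v))
        - (starRingEnd ℂ) (w₂ (z + ↑t * v)) * u₂ (z + ↑t * v)
        - u₃ (z + ↑t * v) * (starRingEnd ℂ) (w₃ (z + ↑t * v))
        + (starRingEnd ℂ) (w₄ (z + ↑t * v)) * u₄ (z + ↑t * v)) =ᶠ[𝓝 (0:ℝ)]
        (fun _ => 0) := hmem.mono (fun t ht => hyp _ ht)
    have hzero : HasDerivAt (fun t : ℝ =>
        u₁ (z + ↑t * v) * (starRingEnd ℂ) (w₁ (z + ↑t * v))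
        - (starRingEnd ℂ) (w₂ (z + ↑t * v)) * u₂ (z + ↑t * v)
        - u₃ (z + ↑t * v) * (starRingEnd ℂ) (w₃ (z + ↑t * v))
        + (starRingEnd ℂ) (w₄ (z + ↑t * v)) * u₄ (z + ↑t * v)) 0 0 :=
      (hasDerivAt_const (0:ℝ) (0:ℂ)).congr_of_eventuallyEq hF0
    exact hsum.unique hzero
  have E1 := line 1
  have E2 := line Complex.I
  simp only [map_mul, Complex.conj_I, map_one, mul_one] at E1 E2
  constructor
  · linear_combination (1/2 : ℂ) * E1 - (Complex.I/2) * E2 + (((u₁' * (starRingEnd ℂ) (w₁ z) - (starRingEnd ℂ) (w₂ z) * u₂' - u₃' * (starRingEnd ℂ) (w₃ z) + (starRingEnd ℂ) (w₄ z) * u₄') - (u₁ z * (starRingEnd ℂ) w₁' - (starRingEnd ℂ) w₂' * u₂ z - u₃ z * (starRingEnd ℂ) w₃' + (starRingEnd ℂ) w₄' * u₄ z))/2) * Complex.I_mul_I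
  · linear_combination (1/2 : ℂ) * E1 + (Complex.I/2) * E2 - (((u₁' * (starRingEnd ℂ) (w₁ z) - (starRingEnd ℂ) (w₂ z) * u₂' - u₃' * (starRingEnd ℂ) (w₃ z) + (starRingEnd ℂ) (w₄ z) * u₄') - (u₁ z * (starRingEnd ℂ) w₁' - (starRingEnd ℂ) w₂' * u₂ z - u₃ z * (starRingEnd ℂ) w₃' + (starRingEnd ℂ) w₄' * u₄ z))/2) * Complex.I_mul_I

/-- iterated derivatives of an analytic function are analytic. -/
lemma iter_analytic {D : Set ℂ} {f : ℂ → ℂ} (hf : AnalyticOnNhd ℂ f D) :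
    ∀ n, AnalyticOnNhd ℂ (iteratedDeriv n f) D := by
  intro n
  induction n with
  | zero => simpa [iteratedDeriv_zero] using hf
  | succ n ih => rw [iteratedDeriv_succ]; exact ih.deriv

lemma evIter {φ ψ : ℂ → ℂ} {x : ℂ} (h : φ =ᶠ[𝓝 x] ψ) (n : ℕ) :
    iteratedDeriv n φ =ᶠ[𝓝 x] iteratedDeriv n ψ := by
  induction n with
  | zero => simpa [iteratedDeriv_zero] using h
  | succ n ih => rw [iteratedDeriv_succ, iteratedDeriv_succ]; exact ih.deriv

/-- iterated derivative of a linear combination on an open set. -/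
lemma iter_combo {D : Set ℂ} (hD : IsOpen D) {φ ψ χ : ℂ → ℂ}
    (hφ : AnalyticOnNhd ℂ φ D) (hψ : AnalyticOnNhd ℂ ψ D) (hχ : AnalyticOnNhd ℂ χ D)
    (α β γ : ℂ) : ∀ n, Set.EqOn (iteratedDeriv n (fun z => α * φ z + β * ψ z + γ * χ z))
      (fun z => α * iteratedDeriv n φ z + β * iteratedDeriv n ψ z + γ * iteratedDeriv n χ z)
      D := by
  intro n
  induction n with
  | zero => intro z hz; simp [iteratedDeriv_zero]
  | succ n ih =>
    intro z hz
    rw [iteratedDeriv_succ]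
    have hev : iteratedDeriv n (fun z => α * φ z + β * ψ z + γ * χ z) =ᶠ[𝓝 z]
        (fun y => α * iteratedDeriv n φ y + β * iteratedDeriv n ψ y
          + γ * iteratedDeriv n χ y) :=
      Filter.eventuallyEq_of_mem (hD.mem_nhds hz) ih
    rw [hev.deriv_eq]
    have dφ := ((iter_analytic hφ n) z hz).differentiableAt.hasDerivAt
    have dψ := ((iter_analytic hψ n) z hz).differentiableAt.hasDerivAt
    have dχ := ((iter_analytic hχ n) z hz).differentiableAt.hasDerivAt
    have hcomb : HasDerivAt (fun y => α * iteratedDeriv n φ y + β * iteratedDeriv n ψ y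
        + γ * iteratedDeriv n χ y)
        (α * deriv (iteratedDeriv n φ) z + β * deriv (iteratedDeriv n ψ) z
          + γ * deriv (iteratedDeriv n χ) z) z :=
      ((dφ.const_mul α).add (dψ.const_mul β)).add (dχ.const_mul γ)
    rw [hcomb.deriv]
    simp [iteratedDeriv_succ]

/-- Identity theorem from vanishing of all iterated derivatives at a point. -/
lemma eqOn_zero_of_iter {D : Set ℂ} (hD : IsOpen D) (hconn : IsPreconnected D)
    {h : ℂ → ℂ} (hh : AnalyticOnNhd ℂ h D) {z₀ : ℂ} (hz₀ : z₀ ∈ D)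
    (hder : ∀ n, iteratedDeriv n h z₀ = 0) : Set.EqOn h 0 D := by
  obtain ⟨r, hr, hball⟩ := Metric.isOpen_iff.1 hD z₀ hz₀
  have hdiff : DifferentiableOn ℂ h (Metric.ball z₀ r) :=
    (hh.mono hball).differentiableOn
  have hev : h =ᶠ[𝓝 z₀] 0 := by
    apply Filter.eventuallyEq_of_mem (Metric.ball_mem_nhds z₀ hr)
    intro z hzb
    have := Complex.taylorSeries_eq_on_ball' hzb hdiff
    rw [← this]
    simp [hder]
  exact hh.eqOn_zero_of_preconnected_of_eventuallyEq_zero hconn hz₀ hev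

lemma im_conv (f g : ℂ) (hf : f ≠ 0) :
    (g / f).im * ‖f‖ ^ 2 = (g * (starRingEnd ℂ) f).im := by
  have hns : Complex.normSq f ≠ 0 := by simpa [Complex.normSq_eq_zero] using hf
  rw [Complex.sq_norm, Complex.div_im, Complex.mul_im, Complex.conj_re, Complex.conj_im]
  field_simp
  ring

lemma iter_zero_fun : ∀ n, iteratedDeriv n (fun _ : ℂ => (0:ℂ)) = fun _ => 0 := by
  intro n
  induction n with
  | zero => simp [iteratedDeriv_zero]
  | succ n ih => rw [iteratedDeriv_succ, ih]; funext x; simp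


/-- iterated derivative of a constant multiple on an open set. -/
lemma iter_cm {D : Set ℂ} (hD : IsOpen D) {φ : ℂ → ℂ}
    (hφ : AnalyticOnNhd ℂ φ D) (c : ℂ) :
    ∀ n, Set.EqOn (iteratedDeriv n (fun z => c * φ z))
      (fun z => c * iteratedDeriv n φ z) D := by
  intro n
  induction n with
  | zero => intro z hz; simp [iteratedDeriv_zero]
  | succ n ih =>
    intro z hz
    rw [iteratedDeriv_succ]
    have hev : iteratedDeriv n (fun z => c * φ z) =ᶠ[𝓝 z]
        (fun y => c * iteratedDeriv n φ y) :=
      Filter.eventuallyEq_of_mem (hD.mem_nhds hz) ih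
    rw [hev.deriv_eq]
    have dφ := ((iter_analytic hφ n) z hz).differentiableAt.hasDerivAt
    rw [(dφ.const_mul c).deriv]
    simp [iteratedDeriv_succ]

end SKaux

/-- Two special pairs on a domain inducing the same metric differ by a twist and an
`SL₂(ℝ)` transformation. -/
theorem stmt_10 (D : Set ℂ) (hD : IsOpen D) (hconn : IsConnected D)
    (f₁ g₁ f₂ g₂ : ℂ → ℂ)
    (hf₁ : DifferentiableOn ℂ f₁ D) (hg₁ : DifferentiableOn ℂ g₁ D)
    (hf₂ : DifferentiableOn ℂ f₂ D) (hg₂ : DifferentiableOn ℂ g₂ D)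
    (hf₁0 : ∀ z ∈ D, f₁ z ≠ 0) (hf₂0 : ∀ z ∈ D, f₂ z ≠ 0)
    (hτ₁ : ∀ z ∈ D, 0 < (g₁ z / f₁ z).im) (hτ₂ : ∀ z ∈ D, 0 < (g₂ z / f₂ z).im)
    (hmetric : ∀ z ∈ D, (g₁ z / f₁ z).im * ‖f₁ z‖ ^ 2
      = (g₂ z / f₂ z).im * ‖f₂ z‖ ^ 2) :
    ∃ (θ a b c d : ℝ), a * d - b * c = 1 ∧
      ∀ z ∈ D, f₂ z = Complex.exp (θ * Complex.I) * ((a : ℂ) * f₁ z + (c : ℂ) * g₁ z) ∧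
        g₂ z = Complex.exp (θ * Complex.I) * ((b : ℂ) * f₁ z + (d : ℂ) * g₁ z) := by
  classical
  have hA1 : AnalyticOnNhd ℂ f₁ D := hf₁.analyticOnNhd hD
  have hA2 : AnalyticOnNhd ℂ g₁ D := hg₁.analyticOnNhd hD
  have hA3 : AnalyticOnNhd ℂ f₂ D := hf₂.analyticOnNhd hD
  have hA4 : AnalyticOnNhd ℂ g₂ D := hg₂.analyticOnNhd hD
  have him : ∀ z ∈ D, (g₁ z * (starRingEnd ℂ) (f₁ z)).im
      = (g₂ z * (starRingEnd ℂ) (f₂ z)).im := by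
    intro z hz
    rw [← im_conv _ _ (hf₁0 z hz), ← im_conv _ _ (hf₂0 z hz)]
    exact hmetric z hz
  -- the polarized relations
  have star : ∀ m n, ∀ z ∈ D,
      iteratedDeriv m g₁ z * (starRingEnd ℂ) (iteratedDeriv n f₁ z)
      - (starRingEnd ℂ) (iteratedDeriv n g₁ z) * iteratedDeriv m f₁ z
      - iteratedDeriv m g₂ z * (starRingEnd ℂ) (iteratedDeriv n f₂ z)
      + (starRingEnd ℂ) (iteratedDeriv n g₂ z) * iteratedDeriv m f₂ z = 0 := by
    have hderiv : ∀ (f : ℂ → ℂ), AnalyticOnNhd ℂ f D → ∀ (m : ℕ) (z : ℂ), z ∈ D →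
        HasDerivAt (iteratedDeriv m f) (iteratedDeriv (m+1) f z) z := by
      intro f hf m z hz
      rw [iteratedDeriv_succ]
      exact ((iter_analytic hf m) z hz).differentiableAt.hasDerivAt
    have base : ∀ z ∈ D,
        iteratedDeriv 0 g₁ z * (starRingEnd ℂ) (iteratedDeriv 0 f₁ z)
        - (starRingEnd ℂ) (iteratedDeriv 0 g₁ z) * iteratedDeriv 0 f₁ z
        - iteratedDeriv 0 g₂ z * (starRingEnd ℂ) (iteratedDeriv 0 f₂ z)
        + (starRingEnd ℂ) (iteratedDeriv 0 g₂ z) * iteratedDeriv 0 f₂ z = 0 := by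
      intro z hz
      simp only [iteratedDeriv_zero]
      have h1 : (g₁ z * (starRingEnd ℂ) (f₁ z)) - (starRingEnd ℂ) (g₁ z * (starRingEnd ℂ) (f₁ z))
          - ((g₂ z * (starRingEnd ℂ) (f₂ z))
            - (starRingEnd ℂ) (g₂ z * (starRingEnd ℂ) (f₂ z))) = 0 := by
        rw [Complex.sub_conj, Complex.sub_conj, him z hz]
        ring
      simp only [map_mul, Complex.conj_conj] at h1
      linear_combination h1
    have step : ∀ m n, (∀ z ∈ D,
        iteratedDeriv m g₁ z * (starRingEnd ℂ) (iteratedDeriv n f₁ z)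
        - (starRingEnd ℂ) (iteratedDeriv n g₁ z) * iteratedDeriv m f₁ z
        - iteratedDeriv m g₂ z * (starRingEnd ℂ) (iteratedDeriv n f₂ z)
        + (starRingEnd ℂ) (iteratedDeriv n g₂ z) * iteratedDeriv m f₂ z = 0) →
        ∀ z ∈ D,
        (iteratedDeriv (m+1) g₁ z * (starRingEnd ℂ) (iteratedDeriv n f₁ z)
        - (starRingEnd ℂ) (iteratedDeriv n g₁ z) * iteratedDeriv (m+1) f₁ z
        - iteratedDeriv (m+1) g₂ z * (starRingEnd ℂ) (iteratedDeriv n f₂ z)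
        + (starRingEnd ℂ) (iteratedDeriv n g₂ z) * iteratedDeriv (m+1) f₂ z = 0) ∧
        (iteratedDeriv m g₁ z * (starRingEnd ℂ) (iteratedDeriv (n+1) f₁ z)
        - (starRingEnd ℂ) (iteratedDeriv (n+1) g₁ z) * iteratedDeriv m f₁ z
        - iteratedDeriv m g₂ z * (starRingEnd ℂ) (iteratedDeriv (n+1) f₂ z)
        + (starRingEnd ℂ) (iteratedDeriv (n+1) g₂ z) * iteratedDeriv m f₂ z = 0) := by
      intro m n hS z hz
      exact step_deriv hD hz (hderiv g₁ hA2 m z hz) (hderiv f₁ hA1 m z hz)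
        (hderiv g₂ hA4 m z hz) (hderiv f₂ hA3 m z hz) (hderiv f₁ hA1 n z hz)
        (hderiv g₁ hA2 n z hz) (hderiv f₂ hA3 n z hz) (hderiv g₂ hA4 n z hz) hS
    intro m
    induction m with
    | zero =>
      intro n
      induction n with
      | zero => exact base
      | succ n ih => exact fun z hz => ((step 0 n ih) z hz).2
    | succ m ih =>
      intro n
      exact fun z hz => ((step m n (ih n)) z hz).1
  by_cases hw : ∀ z ∈ D, f₁ z * deriv g₁ z - g₁ z * deriv f₁ z = 0
  · -- Case (ii): τ₁ is constant
    obtain ⟨z₀, hz₀⟩ := hconn.nonempty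
    have hfz₀ := hf₁0 z₀ hz₀
    -- g₁ is a constant multiple of f₁
    have hdz : Set.EqOn (deriv (fun z => g₁ z / f₁ z)) (fun _ => (0:ℂ)) D := by
      intro z hz
      have hfa := (hA1 z hz).differentiableAt
      have hga := (hA2 z hz).differentiableAt
      have : deriv (fun y => g₁ y / f₁ y) z
          = (deriv g₁ z * f₁ z - g₁ z * deriv f₁ z) / f₁ z ^ 2 := deriv_div hga hfa (hf₁0 z hz)
      rw [this, show deriv g₁ z * f₁ z - g₁ z * deriv f₁ z = 0 from by linear_combination hw z hz]
      simp
    have hψa : AnalyticOnNhd ℂ (fun z => g₁ z / f₁ z - g₁ z₀ / f₁ z₀) D :=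
      (hA2.div hA1 hf₁0).sub analyticOnNhd_const
    have hψiter : ∀ n, iteratedDeriv n (fun z => g₁ z / f₁ z - g₁ z₀ / f₁ z₀) z₀ = 0 := by
      intro n
      cases n with
      | zero => simp [iteratedDeriv_zero]
      | succ n =>
        rw [iteratedDeriv_succ']
        have hψd : deriv (fun z => g₁ z / f₁ z - g₁ z₀ / f₁ z₀)
            = deriv (fun z => g₁ z / f₁ z) := by
          funext x
          exact deriv_sub_const _
        rw [hψd]
        have hev := evIter (Filter.eventuallyEq_of_mem (hD.mem_nhds hz₀) hdz) n
        rw [hev.eq_of_nhds, iter_zero_fun n]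
    have hψ0 : Set.EqOn (fun z => g₁ z / f₁ z - g₁ z₀ / f₁ z₀) 0 D :=
      eqOn_zero_of_iter hD hconn.isPreconnected hψa hz₀ hψiter
    have hg1 : ∀ z ∈ D, g₁ z = (g₁ z₀ / f₁ z₀) * f₁ z := by
      intro z hz
      have h1 := hψ0 hz
      simp only [Pi.zero_apply, sub_eq_zero] at h1
      rw [← h1]
      field_simp [hf₁0 z hz]
    -- all derivatives of the pair (f₁, g₁) are proportional
    have hG1m : ∀ n, iteratedDeriv n g₁ z₀ = (g₁ z₀ / f₁ z₀) * iteratedDeriv n f₁ z₀ := by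
      intro n
      have h1 := (evIter (Filter.eventuallyEq_of_mem (hD.mem_nhds hz₀)
        (fun z hz => hg1 z hz)) n).eq_of_nhds
      rw [h1, iter_cm hD hA1 (g₁ z₀ / f₁ z₀) n hz₀]
    -- apply the degenerate endgame
    have hBM := endgame2
      (fun m => (iteratedDeriv m f₁ z₀, iteratedDeriv m g₁ z₀))
      (fun m => (iteratedDeriv m f₂ z₀, iteratedDeriv m g₂ z₀))
      (by
        intro m n
        show iteratedDeriv m g₁ z₀ * (starRingEnd ℂ) (iteratedDeriv n f₁ z₀)
          - (starRingEnd ℂ) (iteratedDeriv n g₁ z₀) * iteratedDeriv m f₁ z₀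
          = iteratedDeriv m g₂ z₀ * (starRingEnd ℂ) (iteratedDeriv n f₂ z₀)
          - (starRingEnd ℂ) (iteratedDeriv n g₂ z₀) * iteratedDeriv m f₂ z₀
        linear_combination star m n z₀ hz₀)
      (by
        show iteratedDeriv 0 f₂ z₀ ≠ 0
        simpa [iteratedDeriv_zero] using hf₂0 z₀ hz₀)
      (by
        show (iteratedDeriv 0 g₂ z₀ * (starRingEnd ℂ) (iteratedDeriv 0 f₂ z₀)).im ≠ 0
        simp only [iteratedDeriv_zero]
        rw [← im_conv _ _ (hf₂0 z₀ hz₀)]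
        have := mul_pos (hτ₂ z₀ hz₀)
          (pow_pos (norm_pos_iff.mpr (hf₂0 z₀ hz₀)) 2)
        exact ne_of_gt this)
      (by
        show iteratedDeriv 0 f₁ z₀ ≠ 0
        simpa [iteratedDeriv_zero] using hfz₀)
      (by
        intro m
        show iteratedDeriv m g₁ z₀ * iteratedDeriv 0 f₁ z₀
          = iteratedDeriv m f₁ z₀ * iteratedDeriv 0 g₁ z₀
        rw [hG1m m, hG1m 0]
        ring)
    have hBM' : ∀ m, iteratedDeriv m f₂ z₀ * f₁ z₀ = iteratedDeriv m f₁ z₀ * f₂ z₀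
        ∧ iteratedDeriv m g₂ z₀ * f₁ z₀ = iteratedDeriv m f₁ z₀ * g₂ z₀ := by
      intro m
      have h1 : iteratedDeriv m f₂ z₀ * iteratedDeriv 0 f₁ z₀
          = iteratedDeriv m f₁ z₀ * iteratedDeriv 0 f₂ z₀ := (hBM m).1
      have h2 : iteratedDeriv m g₂ z₀ * iteratedDeriv 0 f₁ z₀
          = iteratedDeriv m f₁ z₀ * iteratedDeriv 0 g₂ z₀ := (hBM m).2
      simp only [iteratedDeriv_zero] at h1 h2
      exact ⟨h1, h2⟩
    -- functional identities
    have hAc_feq : AnalyticOnNhd ℂ (fun z => (1:ℂ) * f₂ z + (-(f₂ z₀ / f₁ z₀)) * f₁ z + (0:ℂ) * g₁ z) D :=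
      ((analyticOnNhd_const.mul hA3).add (analyticOnNhd_const.mul hA1)).add
        (analyticOnNhd_const.mul hA2)
    have feq : Set.EqOn (fun z => (1:ℂ) * f₂ z + (-(f₂ z₀ / f₁ z₀)) * f₁ z + (0:ℂ) * g₁ z) 0 D := by
      apply eqOn_zero_of_iter hD hconn.isPreconnected hAc_feq hz₀
      intro n
      rw [iter_combo hD hA3 hA1 hA2 1 (-(f₂ z₀ / f₁ z₀)) 0 n hz₀]
      show (1:ℂ) * iteratedDeriv n f₂ z₀ + (-(f₂ z₀ / f₁ z₀)) * iteratedDeriv n f₁ z₀ + 0 * iteratedDeriv n g₁ z₀ = 0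
      have h1 : iteratedDeriv n f₂ z₀ = iteratedDeriv n f₁ z₀ * f₂ z₀ / f₁ z₀ := by
        rw [eq_div_iff hfz₀]
        exact (hBM' n).1
      rw [h1]
      ring
    have hAc_geq : AnalyticOnNhd ℂ (fun z => (1:ℂ) * g₂ z + (-(g₂ z₀ / f₁ z₀)) * f₁ z + (0:ℂ) * g₁ z) D :=
      ((analyticOnNhd_const.mul hA4).add (analyticOnNhd_const.mul hA1)).add
        (analyticOnNhd_const.mul hA2)
    have geq : Set.EqOn (fun z => (1:ℂ) * g₂ z + (-(g₂ z₀ / f₁ z₀)) * f₁ z + (0:ℂ) * g₁ z) 0 D := by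
      apply eqOn_zero_of_iter hD hconn.isPreconnected hAc_geq hz₀
      intro n
      rw [iter_combo hD hA4 hA1 hA2 1 (-(g₂ z₀ / f₁ z₀)) 0 n hz₀]
      show (1:ℂ) * iteratedDeriv n g₂ z₀ + (-(g₂ z₀ / f₁ z₀)) * iteratedDeriv n f₁ z₀ + 0 * iteratedDeriv n g₁ z₀ = 0
      have h1 : iteratedDeriv n g₂ z₀ = iteratedDeriv n f₁ z₀ * g₂ z₀ / f₁ z₀ := by
        rw [eq_div_iff hfz₀]
        exact (hBM' n).2
      rw [h1]
      ring
    -- construct the real matrix (no twist needed)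
    set τ : ℂ := g₁ z₀ / f₁ z₀ with hτdef
    set ρ : ℂ := f₂ z₀ / f₁ z₀ with hρdef
    set σ : ℂ := g₂ z₀ / f₁ z₀ with hσdef
    have τim : 0 < τ.im := hτ₁ z₀ hz₀
    have hIm : ((starRingEnd ℂ) ρ * σ).im = τ.im := by
      have hc1 : (starRingEnd ℂ) (f₁ z₀) ≠ 0 := by simpa using hfz₀
      have hmulc : ((starRingEnd ℂ) ρ * σ) * (f₁ z₀ * (starRingEnd ℂ) (f₁ z₀))
          = g₂ z₀ * (starRingEnd ℂ) (f₂ z₀) := by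
        rw [hρdef, hσdef, map_div₀]
        field_simp
      have hmulc2 : τ * (f₁ z₀ * (starRingEnd ℂ) (f₁ z₀))
          = g₁ z₀ * (starRingEnd ℂ) (f₁ z₀) := by
        rw [hτdef]
        field_simp
      have hns : f₁ z₀ * (starRingEnd ℂ) (f₁ z₀) = ((Complex.normSq (f₁ z₀) : ℝ) : ℂ) :=
        Complex.mul_conj _
      have htpos : (0:ℝ) < Complex.normSq (f₁ z₀) := Complex.normSq_pos.2 hfz₀
      have h1 : ((starRingEnd ℂ) ρ * σ).im * Complex.normSq (f₁ z₀)
          = (g₂ z₀ * (starRingEnd ℂ) (f₂ z₀)).im := by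
        rw [← hmulc, hns]
        simp [Complex.mul_im]
      have h2 : τ.im * Complex.normSq (f₁ z₀)
          = (g₁ z₀ * (starRingEnd ℂ) (f₁ z₀)).im := by
        rw [← hmulc2, hns]
        simp [Complex.mul_im]
      have h3 := him z₀ hz₀
      have h4 : ((starRingEnd ℂ) ρ * σ).im * Complex.normSq (f₁ z₀)
          = τ.im * Complex.normSq (f₁ z₀) := by rw [h1, h2, h3]
      exact mul_right_cancel₀ (ne_of_gt htpos) h4
    set cc : ℝ := ρ.im / τ.im with hccdef
    set aa : ℝ := ρ.re - cc * τ.re with haadef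
    set dd : ℝ := σ.im / τ.im with hdddef
    set bb : ℝ := σ.re - dd * τ.re with hbbdef
    have hρeq : ρ = (aa : ℂ) + (cc : ℂ) * τ := by
      apply Complex.ext
      · simp [haadef, Complex.add_re, Complex.mul_re, Complex.ofReal_re, Complex.ofReal_im]
      · simp only [Complex.add_im, Complex.mul_im, Complex.ofReal_re, Complex.ofReal_im,
          Complex.ofReal_re]
        rw [hccdef]
        field_simp
        ring
    have hσeq : σ = (bb : ℂ) + (dd : ℂ) * τ := by
      apply Complex.ext
      · simp [hbbdef, Complex.add_re, Complex.mul_re, Complex.ofReal_re, Complex.ofReal_im]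
      · simp only [Complex.add_im, Complex.mul_im, Complex.ofReal_re, Complex.ofReal_im]
        rw [hdddef]
        field_simp
        ring
    have hdet : aa * dd - bb * cc = 1 := by
      rw [hρeq, hσeq] at hIm
      simp only [map_add, map_mul, Complex.conj_ofReal, Complex.add_im, Complex.add_re,
        Complex.mul_im, Complex.mul_re, Complex.conj_re, Complex.conj_im,
        Complex.ofReal_re, Complex.ofReal_im] at hIm
      have h5 : (aa * dd - bb * cc) * τ.im = 1 * τ.im := by
        ring_nf
        ring_nf at hIm
        linarith [hIm]
      exact mul_right_cancel₀ (ne_of_gt τim) h5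
    refine ⟨0, aa, bb, cc, dd, hdet, ?_⟩
    intro z hz
    have hfz := hf₁0 z hz
    constructor
    · have h1 := feq hz
      simp only [Pi.zero_apply] at h1
      have h2 : f₂ z = ρ * f₁ z := by
        linear_combination h1
      rw [h2, hg1 z hz, hρeq]
      simp only [Complex.ofReal_zero, zero_mul, Complex.exp_zero, one_mul]
      ring
    · have h1 := geq hz
      simp only [Pi.zero_apply] at h1
      have h2 : g₂ z = σ * f₁ z := by
        linear_combination h1
      rw [h2, hg1 z hz, hσeq]
      simp only [Complex.ofReal_zero, zero_mul, Complex.exp_zero, one_mul]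
      ring
  · -- Case (i): nondegenerate frame somewhere
    push_neg at hw
    obtain ⟨z₀, hz₀, hWne⟩ := hw
    obtain ⟨P, Q, R, S, hh1, hh2, hh3, hcomp⟩ := endgame1
      (fun m => (iteratedDeriv m f₁ z₀, iteratedDeriv m g₁ z₀))
      (fun m => (iteratedDeriv m f₂ z₀, iteratedDeriv m g₂ z₀))
      (by
        intro m n
        show iteratedDeriv m g₁ z₀ * (starRingEnd ℂ) (iteratedDeriv n f₁ z₀)
          - (starRingEnd ℂ) (iteratedDeriv n g₁ z₀) * iteratedDeriv m f₁ z₀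
          = iteratedDeriv m g₂ z₀ * (starRingEnd ℂ) (iteratedDeriv n f₂ z₀)
          - (starRingEnd ℂ) (iteratedDeriv n g₂ z₀) * iteratedDeriv m f₂ z₀
        linear_combination star m n z₀ hz₀)
      (by
        show iteratedDeriv 0 f₁ z₀ * iteratedDeriv 1 g₁ z₀
          - iteratedDeriv 0 g₁ z₀ * iteratedDeriv 1 f₁ z₀ ≠ 0
        simpa [iteratedDeriv_zero, iteratedDeriv_one] using hWne)
    obtain ⟨θ, a, b, c, d, hdet, hP, hR, hQ, hS⟩ := unitary_decomp P Q R S hh1 hh2 hh3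
    have hAc_hfeq : AnalyticOnNhd ℂ (fun z => (1:ℂ) * f₂ z + (-P) * f₁ z + (-Q) * g₁ z) D :=
      ((analyticOnNhd_const.mul hA3).add (analyticOnNhd_const.mul hA1)).add
        (analyticOnNhd_const.mul hA2)
    have hfeq : Set.EqOn (fun z => (1:ℂ) * f₂ z + (-P) * f₁ z + (-Q) * g₁ z) 0 D := by
      apply eqOn_zero_of_iter hD hconn.isPreconnected hAc_hfeq hz₀
      intro n
      rw [iter_combo hD hA3 hA1 hA2 1 (-P) (-Q) n hz₀]
      show (1:ℂ) * iteratedDeriv n f₂ z₀ + (-P) * iteratedDeriv n f₁ z₀ + (-Q) * iteratedDeriv n g₁ z₀ = 0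
      have h1 : iteratedDeriv n f₂ z₀
          = P * iteratedDeriv n f₁ z₀ + Q * iteratedDeriv n g₁ z₀ := (hcomp n).1
      rw [h1]
      ring
    have hAc_hgeq : AnalyticOnNhd ℂ (fun z => (1:ℂ) * g₂ z + (-R) * f₁ z + (-S) * g₁ z) D :=
      ((analyticOnNhd_const.mul hA4).add (analyticOnNhd_const.mul hA1)).add
        (analyticOnNhd_const.mul hA2)
    have hgeq : Set.EqOn (fun z => (1:ℂ) * g₂ z + (-R) * f₁ z + (-S) * g₁ z) 0 D := by
      apply eqOn_zero_of_iter hD hconn.isPreconnected hAc_hgeq hz₀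
      intro n
      rw [iter_combo hD hA4 hA1 hA2 1 (-R) (-S) n hz₀]
      show (1:ℂ) * iteratedDeriv n g₂ z₀ + (-R) * iteratedDeriv n f₁ z₀ + (-S) * iteratedDeriv n g₁ z₀ = 0
      have h1 : iteratedDeriv n g₂ z₀
          = R * iteratedDeriv n f₁ z₀ + S * iteratedDeriv n g₁ z₀ := (hcomp n).2
      rw [h1]
      ring
    refine ⟨θ, a, b, c, d, hdet, ?_⟩
    intro z hz
    constructor
    · have h1 := hfeq hz
      simp only [Pi.zero_apply] at h1
      rw [hP, hQ] at h1
      linear_combination h1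
    · have h1 := hgeq hz
      simp only [Pi.zero_apply] at h1
      rw [hR, hS] at h1
      linear_combination h1
end

section
/- Let D ⊆ ℂ be a nonempty connected open set, and let f, g : D → ℂ be holomorphic with f nowhere vanishing and Im(g(z)/f(z)) > 0 for all z ∈ D. Suppose there exist θ ∈ ℝ with θ not an integer multiple of π and a matrix [[a, b], [c, d]] ∈ SL₂(ℝ) such that e^{iθ}·f = a·f + c·g and e^{iθ}·g = b·f + d·g on D. Then there is a constant λ ∈ ℂ with g = λ·f on D (so g/f is constant and the induced metric is flat). (This is the coordinate form of the statement that twisting by θ ∉ πℤ gives the same special Kähler structure only if the metric is flat.) -/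
open Complex

/-- If a special pair `(f, g)` is carried to its twist by `θ ∉ πℤ` by an `SL₂(ℝ)`
transformation, then `g/f` is constant (the metric is flat). -/
theorem stmt_11 (D : Set ℂ) (hD : IsOpen D) (hconn : IsConnected D)
    (f g : ℂ → ℂ) (hf : DifferentiableOn ℂ f D) (hg : DifferentiableOn ℂ g D)
    (hf0 : ∀ z ∈ D, f z ≠ 0) (hτ : ∀ z ∈ D, 0 < (g z / f z).im)
    (θ : ℝ) (hθ : ∀ n : ℤ, θ ≠ n * Real.pi)
    (a b c d : ℝ) (hdet : a * d - b * c = 1)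
    (h1 : ∀ z ∈ D, Complex.exp (θ * Complex.I) * f z = (a : ℂ) * f z + (c : ℂ) * g z)
    (h2 : ∀ z ∈ D, Complex.exp (θ * Complex.I) * g z = (b : ℂ) * f z + (d : ℂ) * g z) :
    ∃ lam : ℂ, ∀ z ∈ D, g z = lam * f z := by
  -- sin θ ≠ 0
  have hsin : Real.sin θ ≠ 0 := by
    intro h
    rcases Real.sin_eq_zero_iff.mp h with ⟨n, hn⟩
    exact hθ n hn.symm
  -- the quotient equation at each point
  have key : ∀ z ∈ D, Complex.exp (θ * Complex.I) = (a : ℂ) + (c : ℂ) * (g z / f z) := by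
    intro z hz
    have hfz := hf0 z hz
    have := h1 z hz
    field_simp at this ⊢
    linear_combination this
  -- c ≠ 0
  have hc : c ≠ 0 := by
    intro hc0
    obtain ⟨z, hz⟩ := hconn.nonempty
    have hk := key z hz
    have him : (Complex.exp (θ * Complex.I)).im = Real.sin θ := by
      simp
    rw [hc0] at hk
    simp at hk
    rw [hk] at him
    simp at him
    exact hsin him.symm
  refine ⟨(Complex.exp (θ * Complex.I) - a) / c, fun z hz => ?_⟩
  have hk := key z hz
  have hfz := hf0 z hz
  have hcC : (c : ℂ) ≠ 0 := by exact_mod_cast hc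
  rw [div_mul_eq_mul_div, eq_div_iff hcC]
  linear_combination -h1 z hz
end

section
/- Let P = [[√2, 0], [0, 1/√2]] ∈ SL₂(ℝ). Then conjugation by P maps Γ(2) bijectively onto Γ₀(4): the set {P⁻¹·A·P : A ∈ Γ(2)} equals Γ₀(4) (where elements of Γ(2) and Γ₀(4) are viewed as real matrices). -/
open Matrix MatrixGroups CongruenceSubgroup

/-- The matrix `P = [[√2, 0], [0, 1/√2]]`. -/
noncomputable def P12 : Matrix (Fin 2) (Fin 2) ℝ :=
  !![Real.sqrt 2, 0; 0, (Real.sqrt 2)⁻¹]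

private lemma s2 : Real.sqrt 2 * Real.sqrt 2 = 2 := Real.mul_self_sqrt (by norm_num)

private lemma s2ne : Real.sqrt 2 ≠ 0 := by positivity

private lemma P12_inv : P12⁻¹ = !![(Real.sqrt 2)⁻¹, 0; 0, Real.sqrt 2] := by
  apply Matrix.inv_eq_left_inv
  rw [P12]
  ext i j
  fin_cases i <;> fin_cases j <;>
    simp [Matrix.mul_apply, Fin.sum_univ_two, Matrix.one_apply, s2ne]

private lemma conj_eq (a b c d : ℝ) :
    P12⁻¹ * !![a, b; c, d] * P12 = !![a, b / 2; 2 * c, d] := by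
  have e1 : (Real.sqrt 2)⁻¹ * a * Real.sqrt 2 = a := by field_simp
  have e2 : (Real.sqrt 2)⁻¹ * b * (Real.sqrt 2)⁻¹ = b / 2 := by
    field_simp
    rw [Real.sq_sqrt (by norm_num : (0:ℝ) ≤ 2)]; ring
  have e3 : Real.sqrt 2 * c * Real.sqrt 2 = 2 * c := by linear_combination c * s2
  have e4 : Real.sqrt 2 * d * (Real.sqrt 2)⁻¹ = d := by field_simp
  rw [P12_inv, P12, Matrix.mul_fin_two, Matrix.mul_fin_two]
  simp only [mul_zero, zero_mul, add_zero, zero_add]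
  rw [e1, e2, e3, e4]

private lemma conj_int (A : Matrix (Fin 2) (Fin 2) ℤ) :
    P12⁻¹ * A.map (Int.cast : ℤ → ℝ) * P12 =
      !![(A 0 0 : ℝ), (A 0 1 : ℝ) / 2; 2 * (A 1 0 : ℝ), (A 1 1 : ℝ)] := by
  rw [Matrix.eta_fin_two (A.map _)]
  simp only [Matrix.map_apply]
  exact conj_eq _ _ _ _

/-- Conjugation by `[[√2, 0], [0, 1/√2]]` maps `Γ(2)` bijectively onto `Γ₀(4)`. -/
theorem stmt_12 :
    {M : Matrix (Fin 2) (Fin 2) ℝ | ∃ A ∈ Gamma 2,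
        M = P12⁻¹ * ((A : Matrix (Fin 2) (Fin 2) ℤ)).map (Int.cast : ℤ → ℝ) * P12}
      = {M : Matrix (Fin 2) (Fin 2) ℝ | ∃ B ∈ Gamma0 4,
        M = ((B : Matrix (Fin 2) (Fin 2) ℤ)).map (Int.cast : ℤ → ℝ)} := by
  ext M
  simp only [Set.mem_setOf_eq]
  constructor
  · rintro ⟨A, hA, rfl⟩
    obtain ⟨h00, h01, h10, h11⟩ := Gamma_mem.mp hA
    rw [ZMod.intCast_zmod_eq_zero_iff_dvd] at h01 h10
    obtain ⟨b, hb⟩ := h01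
    obtain ⟨c, hc⟩ := h10
    have hdet : (A : Matrix (Fin 2) (Fin 2) ℤ).det = 1 := A.2
    rw [Matrix.det_fin_two] at hdet
    rw [hb, hc] at hdet
    refine ⟨⟨!![A.1 0 0, b; 4 * c, A.1 1 1], ?_⟩, ?_, ?_⟩
    · rw [Matrix.det_fin_two_of]
      linear_combination hdet
    · refine Gamma0_mem.mpr ?_
      show ((!![A.1 0 0, b; 4 * c, A.1 1 1] 1 0 : ℤ) : ZMod 4) = 0
      rw [ZMod.intCast_zmod_eq_zero_iff_dvd]
      simp
    · rw [conj_int]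
      ext i j
      fin_cases i <;> fin_cases j <;>
        simp [Matrix.map_apply, hb, hc] <;> push_cast <;> ring
  · rintro ⟨B, hB, rfl⟩
    have h10 : ((B.1 1 0 : ℤ) : ZMod 4) = 0 := Gamma0_mem.mp hB
    rw [ZMod.intCast_zmod_eq_zero_iff_dvd] at h10
    obtain ⟨k, hk⟩ := h10
    have hdet : (B : Matrix (Fin 2) (Fin 2) ℤ).det = 1 := B.2
    rw [Matrix.det_fin_two] at hdet
    rw [hk] at hdet
    have hc2 : ((B.1 1 0 : ℤ) : ZMod 2) = 0 := by
      rw [ZMod.intCast_zmod_eq_zero_iff_dvd]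
      exact ⟨2 * k, by rw [hk]; push_cast; ring⟩
    have e : ((B.1 0 0 * B.1 1 1 - B.1 0 1 * B.1 1 0 : ℤ) : ZMod 2) = 1 := by
      rw [← hk] at hdet
      rw [hdet]; norm_num
    push_cast at e
    rw [hc2, mul_zero, sub_zero] at e
    have h00 : ((B.1 0 0 : ℤ) : ZMod 2) = 1 := by
      revert e; generalize ((B.1 0 0 : ℤ) : ZMod 2) = x
      generalize ((B.1 1 1 : ℤ) : ZMod 2) = y; revert x y; decide
    have h11 : ((B.1 1 1 : ℤ) : ZMod 2) = 1 := by
      rw [h00, one_mul] at e; exact e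
    refine ⟨⟨!![B.1 0 0, 2 * B.1 0 1; 2 * k, B.1 1 1], ?_⟩, ?_, ?_⟩
    · rw [Matrix.det_fin_two_of]
      linear_combination hdet
    · refine Gamma_mem.mpr ?_
      refine ⟨?_, ?_, ?_, ?_⟩
      · exact h00
      · show ((!![B.1 0 0, 2 * B.1 0 1; 2 * k, B.1 1 1] 0 1 : ℤ) : ZMod 2) = 0
        rw [ZMod.intCast_zmod_eq_zero_iff_dvd]; simp
      · show ((!![B.1 0 0, 2 * B.1 0 1; 2 * k, B.1 1 1] 1 0 : ℤ) : ZMod 2) = 0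
        rw [ZMod.intCast_zmod_eq_zero_iff_dvd]; simp
      · exact h11
    · rw [conj_int]
      ext i j
      fin_cases i <;> fin_cases j <;>
        simp [Matrix.map_apply, hk] <;> push_cast <;> ring
end

section
/- N(Γ₀(2)) = 2: the set of cosets P·SL₂(ℤ) in SL₂(ℝ)/SL₂(ℤ) such that P⁻¹·A·P has integer entries for every A ∈ Γ₀(2) has exactly 2 elements. -/
set_option maxHeartbeats 1000000


open Matrix MatrixGroups CongruenceSubgroup

/-- The embedding `SL(2, ℤ) →* SL(2, ℝ)`. -/
noncomputable def toSL2R : SL(2, ℤ) →* SL(2, ℝ) :=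
  Matrix.SpecialLinearGroup.map (Int.castRingHom ℝ)

/-- `SL(2, ℤ)` as a subgroup of `SL(2, ℝ)`. -/
noncomputable def SL2ZinR : Subgroup SL(2, ℝ) := toSL2R.range

/-- The set of cosets `P·SL₂(ℤ)` in `SL₂(ℝ)/SL₂(ℤ)` such that `P⁻¹·A·P` has integer
entries for every `A ∈ G`; its cardinality is `N(G)`. -/
noncomputable def goodCosets (G : Subgroup SL(2, ℤ)) : Set (SL(2, ℝ) ⧸ SL2ZinR) :=
  {x | ∃ P : SL(2, ℝ), x = QuotientGroup.mk P ∧ ∀ A ∈ G,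
    IsIntegerMatrix ((P⁻¹ * toSL2R A * P : SL(2, ℝ)) : Matrix (Fin 2) (Fin 2) ℝ)}

noncomputable def e2 : ℝ := Real.sqrt 2

lemma e2_sq : e2 ^ 2 = 2 := Real.sq_sqrt (by norm_num)
lemma e2_pos : 0 < e2 := Real.sqrt_pos.2 (by norm_num)
lemma e2_ne : e2 ≠ 0 := ne_of_gt e2_pos

noncomputable def Dmat : SL(2, ℝ) :=
  ⟨!![e2⁻¹, 0; 0, e2], by
    rw [Matrix.det_fin_two_of]
    simp [inv_mul_cancel₀ e2_ne]⟩

lemma Dinv_coe : ((Dmat⁻¹ : SL(2, ℝ)) : Matrix (Fin 2) (Fin 2) ℝ) = !![e2, 0; 0, e2⁻¹] := by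
  rw [Matrix.SpecialLinearGroup.SL2_inv_expl]
  ext i j
  fin_cases i <;> fin_cases j <;> simp [Dmat]

lemma mem_of_int (P : SL(2, ℝ))
    (h : ∀ i j, ∃ k : ℤ, (P : Matrix (Fin 2) (Fin 2) ℝ) i j = (k : ℝ)) : P ∈ SL2ZinR := by
  choose k hk using h
  set M : Matrix (Fin 2) (Fin 2) ℤ := Matrix.of k with hM
  have hmap : M.map (Int.castRingHom ℝ) = (P : Matrix (Fin 2) (Fin 2) ℝ) := by
    ext i j
    simp [hM, Matrix.map_apply, hk i j]
  have hdet : M.det = 1 := by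
    have h2 := RingHom.map_det (Int.castRingHom ℝ) M
    rw [RingHom.mapMatrix_apply, hmap, P.2] at h2
    have h3 : ((M.det : ℤ) : ℝ) = 1 := h2
    exact_mod_cast h3
  exact ⟨⟨M, hdet⟩, Subtype.ext (by rw [← hmap]; rfl)⟩

/-- If r², rs, s² are integers, then (r,s) = λ(m,n) with m,n ∈ ℤ and λ² ∈ ℤ. -/
lemma key (r s : ℝ) (a b c : ℤ) (ha : r ^ 2 = (a : ℝ)) (hb : s ^ 2 = (b : ℝ))
    (hc : r * s = (c : ℝ)) :
    ∃ (N m n : ℤ) (lam : ℝ), lam ^ 2 = (N : ℝ) ∧ r = lam * m ∧ s = lam * n := by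
  rcases eq_or_ne r 0 with hr | hr
  · exact ⟨b, 0, 1, s, by rw [hb], by simp [hr], by simp⟩
  · have haR : (a : ℝ) ≠ 0 := by rw [← ha]; positivity
    set qq : ℚ := (c : ℚ) / (a : ℚ) with hqq
    have hden : ((qq.den : ℤ) : ℝ) ≠ 0 := by
      exact_mod_cast qq.den_nz
    set lam : ℝ := r / (qq.den : ℤ) with hlam
    have hrm : r = lam * (qq.den : ℤ) := by rw [hlam]; exact (div_mul_cancel₀ r hden).symm
    have hqr : (qq : ℝ) = (c : ℝ) / (a : ℝ) := by push_cast [hqq]; ring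
    have hsr : s = (qq : ℝ) * r := by
      rw [hqr, div_mul_eq_mul_div, eq_div_iff haR]
      linear_combination (-s) * ha + r * hc
    have hsn : s = lam * (qq.num : ℤ) := by
      rw [hsr, Rat.cast_def, hlam]
      field_simp
      push_cast; ring
    have hcop : IsCoprime ((qq.den : ℤ) ^ 2) ((qq.num : ℤ) ^ 2) := by
      refine (IsCoprime.pow ?_)
      rw [Int.isCoprime_iff_gcd_eq_one, Int.gcd]
      simpa [Nat.coprime_comm] using qq.reduced
    obtain ⟨x, y, hxy⟩ := hcop
    have hxyR : (x : ℝ) * ((qq.den : ℤ) : ℝ) ^ 2 + (y : ℝ) * ((qq.num : ℤ) : ℝ) ^ 2 = 1 := by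
      exact_mod_cast congrArg (fun t : ℤ => (t : ℝ)) hxy
    have h1 : lam ^ 2 * ((qq.den : ℤ) : ℝ) ^ 2 = (a : ℝ) := by
      rw [← ha, hrm]; ring
    have h2 : lam ^ 2 * ((qq.num : ℤ) : ℝ) ^ 2 = (b : ℝ) := by
      rw [← hb, hsn]; ring
    refine ⟨x * a + y * b, qq.den, qq.num, lam, ?_, hrm, hsn⟩
    push_cast
    linear_combination (x : ℝ) * h1 + (y : ℝ) * h2 - lam ^ 2 * hxyR

def Tz : SL(2, ℤ) := ⟨!![1, 1; 0, 1], by norm_num [Matrix.det_fin_two_of]⟩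
def Uz : SL(2, ℤ) := ⟨!![1, 0; 2, 1], by norm_num [Matrix.det_fin_two_of]⟩

lemma Tz_mem : Tz ∈ Gamma0 2 := by rw [Gamma0_mem]; simp [Tz]
lemma Uz_mem : Uz ∈ Gamma0 2 := by rw [Gamma0_mem]; simp [Uz]; decide

lemma toSL2R_entry (A : SL(2, ℤ)) (i j : Fin 2) :
    ((toSL2R A : SL(2, ℝ)) : Matrix (Fin 2) (Fin 2) ℝ) i j = ((A i j : ℤ) : ℝ) := by
  simp [toSL2R, Matrix.SpecialLinearGroup.map_apply_coe, Matrix.map_apply]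

lemma toTz : (toSL2R Tz : Matrix (Fin 2) (Fin 2) ℝ) = !![1, 1; 0, 1] := by
  ext i j
  fin_cases i <;> fin_cases j <;>
    (rw [toSL2R_entry]; simp [Tz])

lemma toUz : (toSL2R Uz : Matrix (Fin 2) (Fin 2) ℝ) = !![1, 0; 2, 1] := by
  ext i j
  fin_cases i <;> fin_cases j <;>
    (rw [toSL2R_entry]; simp [Uz])

lemma good_cases (P : SL(2, ℝ))
    (h : ∀ A ∈ Gamma0 2,
      IsIntegerMatrix ((P⁻¹ * toSL2R A * P : SL(2, ℝ)) : Matrix (Fin 2) (Fin 2) ℝ)) :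
    P ∈ SL2ZinR ∨ Dmat⁻¹ * P ∈ SL2ZinR := by
  set p : ℝ := P 0 0 with hp
  set q : ℝ := P 0 1 with hq
  set r : ℝ := P 1 0 with hr
  set s : ℝ := P 1 1 with hs
  have hPc : (P : Matrix (Fin 2) (Fin 2) ℝ) = !![p, q; r, s] := by
    rw [hp, hq, hr, hs]; exact Matrix.eta_fin_two _
  have hPinv : ((P⁻¹ : SL(2, ℝ)) : Matrix (Fin 2) (Fin 2) ℝ) = !![s, -q; -r, p] := by
    rw [Matrix.SpecialLinearGroup.SL2_inv_expl]
    ext i j; fin_cases i <;> fin_cases j <;> rfl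
  have hdet : p * s - q * r = 1 := by
    have h2 := P.2
    rw [Matrix.det_fin_two] at h2
    exact h2
  have hTconj : ((P⁻¹ * toSL2R Tz * P : SL(2, ℝ)) : Matrix (Fin 2) (Fin 2) ℝ)
      = !![s, -q; -r, p] * !![1, 1; 0, 1] * !![p, q; r, s] := by
    rw [Matrix.SpecialLinearGroup.coe_mul, Matrix.SpecialLinearGroup.coe_mul, hPinv, hPc, toTz]
  have hUconj : ((P⁻¹ * toSL2R Uz * P : SL(2, ℝ)) : Matrix (Fin 2) (Fin 2) ℝ)
      = !![s, -q; -r, p] * !![1, 0; 2, 1] * !![p, q; r, s] := by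
    rw [Matrix.SpecialLinearGroup.coe_mul, Matrix.SpecialLinearGroup.coe_mul, hPinv, hPc, toUz]
  obtain ⟨kT00, hkT00⟩ := h Tz Tz_mem 0 0
  obtain ⟨kT01, hkT01⟩ := h Tz Tz_mem 0 1
  obtain ⟨kT10, hkT10⟩ := h Tz Tz_mem 1 0
  obtain ⟨kU00, hkU00⟩ := h Uz Uz_mem 0 0
  obtain ⟨kU01, hkU01⟩ := h Uz Uz_mem 0 1
  obtain ⟨kU10, hkU10⟩ := h Uz Uz_mem 1 0
  rw [hTconj] at hkT00 hkT01 hkT10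
  rw [hUconj] at hkU00 hkU01 hkU10
  simp [Matrix.mul_fin_two] at hkT00 hkT01 hkT10 hkU00 hkU01 hkU10
  have h1 : r ^ 2 = ((-kT10 : ℤ) : ℝ) := by push_cast; linear_combination -hkT10
  have h2 : s ^ 2 = ((kT01 : ℤ) : ℝ) := by push_cast; linear_combination hkT01
  have h3 : r * s = ((kT00 - 1 : ℤ) : ℝ) := by push_cast; linear_combination hkT00 - hdet
  obtain ⟨N, m, n, lam, hN, hrm, hsn⟩ := key r s _ _ _ h1 h2 h3
  have h4 : (e2 * p) ^ 2 = ((kU10 : ℤ) : ℝ) := by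
    push_cast; linear_combination p ^ 2 * e2_sq + hkU10
  have h5 : (e2 * q) ^ 2 = ((-kU01 : ℤ) : ℝ) := by
    push_cast; linear_combination q ^ 2 * e2_sq - hkU01
  have h6 : (e2 * p) * (e2 * q) = ((1 - kU00 : ℤ) : ℝ) := by
    push_cast; linear_combination p * q * e2_sq - hkU00 + hdet
  obtain ⟨N', m', n', mu, hN', hpm, hqn⟩ := key (e2 * p) (e2 * q) _ _ _ h4 h5 h6
  set D : ℤ := m' * n - n' * m with hD
  have hDcast : ((D : ℤ) : ℝ) = (m' : ℝ) * (n : ℝ) - (n' : ℝ) * (m : ℝ) := by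
    rw [hD]; push_cast; ring
  have hDkey : lam * mu * ((D : ℤ) : ℝ) = e2 := by
    push_cast
    linear_combination (-(lam * (n : ℝ))) * hpm + (lam * (m : ℝ)) * hqn + e2 * hdet
      + (e2 * q) * hrm - (e2 * p) * hsn + (lam * mu) * hDcast
  have h7 : (lam * mu * ((D : ℤ) : ℝ)) ^ 2 = e2 ^ 2 := by rw [hDkey]
  have hR : (N : ℝ) * (N' : ℝ) * ((D : ℤ) : ℝ) ^ 2 = 2 := by
    rw [← hN, ← hN', ← e2_sq, ← h7]; ring
  have hZ : N * N' * D ^ 2 = 2 := by exact_mod_cast hR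
  have hprod_ne : lam * mu * ((D : ℤ) : ℝ) ≠ 0 := by rw [hDkey]; exact e2_ne
  have hlam0 : lam ≠ 0 := fun h0 => hprod_ne (by rw [h0]; ring)
  have hmu0 : mu ≠ 0 := fun h0 => hprod_ne (by rw [h0]; ring)
  have hD0 : D ≠ 0 := by
    intro h0
    exact hprod_ne (by rw [h0]; push_cast; ring)
  have hNpos : 0 < N := by
    have : (0 : ℝ) < (N : ℝ) := by rw [← hN]; positivity
    exact_mod_cast this
  have hN'pos : 0 < N' := by
    have : (0 : ℝ) < (N' : ℝ) := by rw [← hN']; positivity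
    exact_mod_cast this
  have hDsq1 : 1 ≤ D ^ 2 := by
    have h0 : D ^ 2 ≠ 0 := pow_ne_zero 2 hD0
    have h00 : 0 ≤ D ^ 2 := sq_nonneg D
    omega
  have hDb : D = 1 ∨ D = -1 := by
    have hNN1 : 1 ≤ N * N' := mul_pos hNpos hN'pos
    have hd2 : D ^ 2 ≤ 2 := by
      nlinarith [mul_le_mul_of_nonneg_right hNN1 (sq_nonneg D)]
    have hdu : 2 * D ≤ 3 := by nlinarith [sq_nonneg (D - 1)]
    have hdl : -3 ≤ 2 * D := by nlinarith [sq_nonneg (D + 1)]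
    omega
  have hD2 : D ^ 2 = 1 := by rcases hDb with h' | h' <;> rw [h'] <;> norm_num
  rw [hD2, mul_one] at hZ
  have hNcases : (N = 1 ∧ N' = 2) ∨ (N = 2 ∧ N' = 1) := by
    have h1N' : (1 : ℤ) ≤ N' := hN'pos
    have hN2 : N ≤ 2 := by
      nlinarith [mul_le_mul_of_nonneg_left h1N' hNpos.le]
    interval_cases N
    · left; constructor; rfl; omega
    · right; constructor; rfl; omega
  rcases hNcases with ⟨hN1, hN'2⟩ | ⟨hN2, hN'1⟩
  · -- integer case
    rw [hN1] at hN
    rw [hN'2] at hN'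
    have hlamc : lam = 1 ∨ lam = -1 := by
      have hl : (lam - 1) * (lam + 1) = 0 := by push_cast at hN; linear_combination hN
      rcases mul_eq_zero.1 hl with h' | h'
      · left; linarith [sub_eq_zero.1 h']
      · right; linarith [eq_neg_of_add_eq_zero_left h']
    have hmuc : mu = e2 ∨ mu = -e2 := by
      have hl : (mu - e2) * (mu + e2) = 0 := by
        push_cast at hN'; linear_combination hN' - e2_sq
      rcases mul_eq_zero.1 hl with h' | h'
      · left; linarith [sub_eq_zero.1 h']
      · right; linarith [eq_neg_of_add_eq_zero_left h']
    have hpZ : ∃ k : ℤ, p = (k : ℝ) := by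
      rcases hmuc with h' | h'
      · exact ⟨m', mul_left_cancel₀ e2_ne (by rw [hpm, h'])⟩
      · exact ⟨-m', mul_left_cancel₀ e2_ne (by rw [hpm, h']; push_cast; ring)⟩
    have hqZ : ∃ k : ℤ, q = (k : ℝ) := by
      rcases hmuc with h' | h'
      · exact ⟨n', mul_left_cancel₀ e2_ne (by rw [hqn, h'])⟩
      · exact ⟨-n', mul_left_cancel₀ e2_ne (by rw [hqn, h']; push_cast; ring)⟩
    have hrZ : ∃ k : ℤ, r = (k : ℝ) := by
      rcases hlamc with h' | h'
      · exact ⟨m, by rw [hrm, h']; ring⟩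
      · exact ⟨-m, by rw [hrm, h']; push_cast; ring⟩
    have hsZ : ∃ k : ℤ, s = (k : ℝ) := by
      rcases hlamc with h' | h'
      · exact ⟨n, by rw [hsn, h']; ring⟩
      · exact ⟨-n, by rw [hsn, h']; push_cast; ring⟩
    left
    apply mem_of_int
    intro i j
    rw [hPc]
    fin_cases i <;> fin_cases j <;>
      simp only [Matrix.cons_val', Matrix.cons_val_zero, Matrix.cons_val_one, Matrix.head_cons,
        Matrix.empty_val', Matrix.cons_val_fin_one, Matrix.head_fin_const]
    exacts [hpZ, hqZ, hrZ, hsZ]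
  · -- sqrt-2 case
    rw [hN2] at hN
    rw [hN'1] at hN'
    have hlamc : lam = e2 ∨ lam = -e2 := by
      have hl : (lam - e2) * (lam + e2) = 0 := by
        push_cast at hN; linear_combination hN - e2_sq
      rcases mul_eq_zero.1 hl with h' | h'
      · left; linarith [sub_eq_zero.1 h']
      · right; linarith [eq_neg_of_add_eq_zero_left h']
    have hmuc : mu = 1 ∨ mu = -1 := by
      have hl : (mu - 1) * (mu + 1) = 0 := by push_cast at hN'; linear_combination hN'
      rcases mul_eq_zero.1 hl with h' | h'
      · left; linarith [sub_eq_zero.1 h']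
      · right; linarith [eq_neg_of_add_eq_zero_left h']
    have hpZ : ∃ k : ℤ, e2 * p = (k : ℝ) := by
      rcases hmuc with h' | h'
      · exact ⟨m', by rw [hpm, h']; ring⟩
      · exact ⟨-m', by rw [hpm, h']; push_cast; ring⟩
    have hqZ : ∃ k : ℤ, e2 * q = (k : ℝ) := by
      rcases hmuc with h' | h'
      · exact ⟨n', by rw [hqn, h']; ring⟩
      · exact ⟨-n', by rw [hqn, h']; push_cast; ring⟩
    have he2i : e2⁻¹ * e2 = 1 := inv_mul_cancel₀ e2_ne
    have hrZ : ∃ k : ℤ, e2⁻¹ * r = (k : ℝ) := by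
      rcases hlamc with h' | h'
      · exact ⟨m, by rw [hrm, h']; linear_combination ((m : ℤ) : ℝ) * he2i⟩
      · exact ⟨-m, by rw [hrm, h']; push_cast; linear_combination (-((m : ℤ) : ℝ)) * he2i⟩
    have hsZ : ∃ k : ℤ, e2⁻¹ * s = (k : ℝ) := by
      rcases hlamc with h' | h'
      · exact ⟨n, by rw [hsn, h']; linear_combination ((n : ℤ) : ℝ) * he2i⟩
      · exact ⟨-n, by rw [hsn, h']; push_cast; linear_combination (-((n : ℤ) : ℝ)) * he2i⟩
    right
    apply mem_of_int
    intro i j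
    have hcoe : ((Dmat⁻¹ * P : SL(2, ℝ)) : Matrix (Fin 2) (Fin 2) ℝ)
        = !![e2 * p, e2 * q; e2⁻¹ * r, e2⁻¹ * s] := by
      rw [Matrix.SpecialLinearGroup.coe_mul, Dinv_coe, hPc]
      ext i j
      fin_cases i <;> fin_cases j <;>
        simp [Matrix.mul_apply, Fin.sum_univ_two]
    rw [hcoe]
    fin_cases i <;> fin_cases j <;>
      simp only [Matrix.cons_val', Matrix.cons_val_zero, Matrix.cons_val_one, Matrix.head_cons,
        Matrix.empty_val', Matrix.cons_val_fin_one, Matrix.head_fin_const]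
    exacts [hpZ, hqZ, hrZ, hsZ]

lemma mem_one : (QuotientGroup.mk (1 : SL(2, ℝ)) : SL(2, ℝ) ⧸ SL2ZinR) ∈ goodCosets (Gamma0 2) := by
  refine ⟨1, rfl, fun A hA i j => ⟨A i j, ?_⟩⟩
  simp [toSL2R_entry]

lemma mem_D : (QuotientGroup.mk Dmat : SL(2, ℝ) ⧸ SL2ZinR) ∈ goodCosets (Gamma0 2) := by
  refine ⟨Dmat, rfl, fun A hA => ?_⟩
  obtain ⟨c2, hc2⟩ := (ZMod.intCast_zmod_eq_zero_iff_dvd (A 1 0) 2).1 (Gamma0_mem.1 hA)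
  have hAc : (toSL2R A : Matrix (Fin 2) (Fin 2) ℝ)
      = !![((A 0 0 : ℤ) : ℝ), ((A 0 1 : ℤ) : ℝ); ((A 1 0 : ℤ) : ℝ), ((A 1 1 : ℤ) : ℝ)] := by
    ext i j; fin_cases i <;> fin_cases j <;> simp [toSL2R_entry]
  have hconj : ((Dmat⁻¹ * toSL2R A * Dmat : SL(2, ℝ)) : Matrix (Fin 2) (Fin 2) ℝ)
      = !![((A 0 0 : ℤ) : ℝ), ((2 * A 0 1 : ℤ) : ℝ); ((c2 : ℤ) : ℝ), ((A 1 1 : ℤ) : ℝ)] := by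
    have hc2R : ((A 1 0 : ℤ) : ℝ) = 2 * (c2 : ℝ) := by exact_mod_cast hc2
    rw [Matrix.SpecialLinearGroup.coe_mul, Matrix.SpecialLinearGroup.coe_mul, Dinv_coe, hAc]
    have hDmatc : (Dmat : Matrix (Fin 2) (Fin 2) ℝ) = !![e2⁻¹, 0; 0, e2] := rfl
    rw [hDmatc]
    ext i j
    fin_cases i <;> fin_cases j
    · simp [Matrix.mul_apply, Fin.sum_univ_two]
      field_simp
      exact mul_div_cancel_left₀ _ e2_ne
    · simp [Matrix.mul_apply, Fin.sum_univ_two]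
      push_cast
      linear_combination ((A 0 1 : ℤ) : ℝ) * e2_sq
    · simp [Matrix.mul_apply, Fin.sum_univ_two]
      have hinv : e2⁻¹ ^ 2 = (2 : ℝ)⁻¹ := by rw [← e2_sq, inv_pow]
      linear_combination (e2⁻¹ * e2⁻¹) * hc2R + 2 * (c2 : ℝ) * hinv
    · simp [Matrix.mul_apply, Fin.sum_univ_two]
      field_simp
      exact mul_div_cancel_left₀ _ e2_ne
  intro i j
  rw [hconj]
  fin_cases i <;> fin_cases j <;>
    simp only [Matrix.cons_val', Matrix.cons_val_zero, Matrix.cons_val_one, Matrix.head_cons,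
      Matrix.empty_val', Matrix.cons_val_fin_one, Matrix.head_fin_const]
  exacts [⟨A 0 0, rfl⟩, ⟨2 * A 0 1, rfl⟩, ⟨c2, rfl⟩, ⟨A 1 1, rfl⟩]

lemma one_ne_D :
    (QuotientGroup.mk (1 : SL(2, ℝ)) : SL(2, ℝ) ⧸ SL2ZinR) ≠ QuotientGroup.mk Dmat := by
  intro hEq
  rw [QuotientGroup.eq] at hEq
  simp only [inv_one, one_mul] at hEq
  obtain ⟨M, hM⟩ := hEq
  have h00 : ((M 0 0 : ℤ) : ℝ) = e2⁻¹ := by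
    have := congrArg (fun X : SL(2, ℝ) => (X : Matrix (Fin 2) (Fin 2) ℝ) 0 0) hM
    simpa [toSL2R_entry, Dmat] using this
  have h2 : ((2 * (M 0 0) ^ 2 : ℤ) : ℝ) = 1 := by
    have hinv : e2⁻¹ ^ 2 = (2 : ℝ)⁻¹ := by rw [inv_pow, e2_sq]
    push_cast
    rw [h00, hinv]
    norm_num
  have h3 : 2 * (M 0 0) ^ 2 = 1 := by exact_mod_cast h2
  have := sq_nonneg (M 0 0)
  omega

/-- `N(Γ₀(2)) = 2`. -/
theorem stmt_13 : (goodCosets (Gamma0 2)).ncard = 2 := by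
  have hset : goodCosets (Gamma0 2)
      = {QuotientGroup.mk (1 : SL(2, ℝ)), QuotientGroup.mk Dmat} := by
    ext x
    constructor
    · rintro ⟨P, rfl, hP⟩
      rcases good_cases P hP with h1 | h2
      · left
        rw [QuotientGroup.eq]
        simpa using inv_mem h1
      · right
        rw [Set.mem_singleton_iff, QuotientGroup.eq]
        simpa [_root_.mul_inv_rev] using inv_mem h2
    · rintro (rfl | rfl)
      · exact mem_one
      · exact mem_D
  rw [hset]
  exact Set.ncard_pair one_ne_D
end
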